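/- arXiv:1812.04390 — 10 statements merged into one kernel-verified Lean document; each statement's English description precedes it below -/
import Mathlib

section
/- For every integer n ≥ 1, every commutative ring R, all β, x_1, …, x_n ∈ R and all y_1, y_2, … ∈ R, the n×n determinant det([x_r|y]^{n−c}(1+βx_r)^{c−1})_{1≤r,c≤n} equals the Vandermonde product ∏_{1≤i<j≤n}(x_i − x_j). (For n = 1 both sides equal 1.) -/
/-- `[x|y]^j = (x ⊕ y_1)(x ⊕ y_2)⋯(x ⊕ y_j)` where `a ⊕ b = a + b + βab` and
`y t` denotes `y_{t+1}` (0-based indexing). -/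
def fpow {R : Type*} [CommRing R] (β : R) (y : ℕ → R) (x : R) (j : ℕ) : R :=
  ∏ t ∈ Finset.range j, (x + y t + β * x * y t)

section aux

variable {R : Type*} [CommRing R]

/-- Stage-1 intermediate matrices. -/
def Amat (n : ℕ) (β : R) (x : Fin n → R) (y : ℕ → R) (k : ℕ) : Matrix (Fin n) (Fin n) R :=
  Matrix.of fun r c : Fin n =>
    x r ^ min k (n - 1 - (c : ℕ)) * fpow β y (x r) (n - 1 - (c : ℕ) - k)
      * (1 + β * x r) ^ (c : ℕ)

/-- Stage-2 intermediate matrices. -/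
def Bmat (n : ℕ) (β : R) (x : Fin n → R) (k : ℕ) : Matrix (Fin n) (Fin n) R :=
  Matrix.of fun r c : Fin n =>
    x r ^ (n - 1 - (c : ℕ)) * (1 + β * x r) ^ ((c : ℕ) - k)

lemma Amat_step (n : ℕ) (β : R) (x : Fin n → R) (y : ℕ → R) (k : ℕ) :
    (Amat n β x y (k + 1)).det = (Amat n β x y k).det := by
  classical
  set E : Matrix (Fin n) (Fin n) R := Matrix.of fun j c : Fin n =>
    if j = c then 1
    else if (j : ℕ) = (c : ℕ) + 1 ∧ (c : ℕ) + k + 1 ≤ n - 1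
      then -(y (n - 2 - (c : ℕ) - k)) else 0 with hEdef
  have hmul : Amat n β x y (k + 1) = Amat n β x y k * E := by
    ext r c
    rw [Matrix.mul_apply]
    by_cases h : (c : ℕ) + k + 1 ≤ n - 1
    · have hc1 : (c : ℕ) + 1 < n := by omega
      let c' : Fin n := ⟨(c : ℕ) + 1, hc1⟩
      have hsum : ∑ j, Amat n β x y k r j * E j c
          = Amat n β x y k r c * E c c + Amat n β x y k r c' * E c' c := by
        refine Finset.sum_eq_add_of_mem c c' (Finset.mem_univ _) (Finset.mem_univ _)
          (by simp [c', Fin.ext_iff]) ?_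
        intro d _ hd
        have h1 : d ≠ c := hd.1
        have h2 : (d : ℕ) ≠ (c : ℕ) + 1 := by
          intro hdc; exact hd.2 (by simp [c', Fin.ext_iff, hdc])
        simp [hEdef, h1, h2]
      rw [hsum]
      have hEcc : E c c = 1 := by simp [hEdef]
      have hEc'c : E c' c = -(y (n - 2 - (c : ℕ) - k)) := by
        have : c' ≠ c := by simp [c', Fin.ext_iff]
        simp [hEdef, this, c', h]
        intro h'; omega
      rw [hEcc, hEc'c]
      -- now pure algebra
      set m : ℕ := n - 1 - (c : ℕ) - (k + 1) with hm
      have e1 : min (k + 1) (n - 1 - (c : ℕ)) = k + 1 := by omega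
      have e2 : min k (n - 1 - (c : ℕ)) = k := by omega
      have e3 : (c' : ℕ) = (c : ℕ) + 1 := rfl
      have e4 : min k (n - 1 - ((c : ℕ) + 1)) = k := by omega
      have e5 : n - 1 - (c : ℕ) - k = m + 1 := by omega
      have e6 : n - 1 - ((c : ℕ) + 1) - k = m := by omega
      have e7 : n - 2 - (c : ℕ) - k = m := by omega
      simp only [Amat, Matrix.of_apply, e1, e2, e3, e4, e5, e6, e7]
      rw [fpow, fpow, Finset.prod_range_succ, ← fpow]
      rw [pow_succ (x r) k, pow_succ (1 + β * x r) (c : ℕ)]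
      ring
    · have hsum : ∑ j, Amat n β x y k r j * E j c
          = Amat n β x y k r c * E c c := by
        refine Finset.sum_eq_single_of_mem c (Finset.mem_univ _) ?_
        intro d _ hd
        have : ¬((d : ℕ) = (c : ℕ) + 1 ∧ (c : ℕ) + k + 1 ≤ n - 1) := by
          intro hx; exact h hx.2
        simp [hEdef, hd, this]
        intro _ h'; omega
      rw [hsum]
      have hEcc : E c c = 1 := by simp [hEdef]
      rw [hEcc, mul_one]
      have e1 : min (k + 1) (n - 1 - (c : ℕ)) = min k (n - 1 - (c : ℕ)) := by omega
      have e2 : n - 1 - (c : ℕ) - (k + 1) = n - 1 - (c : ℕ) - k := by omega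
      simp only [Amat, Matrix.of_apply, e1, e2]
  have hdetE : E.det = 1 := by
    have htri : E.BlockTriangular OrderDual.toDual := by
      intro i j hij
      have hij' : (i : ℕ) < (j : ℕ) := Fin.lt_iff_val_lt_val.mp hij
      have h1 : i ≠ j := Fin.ne_of_val_ne (by omega)
      have h2 : ¬((i : ℕ) = (j : ℕ) + 1 ∧ (j : ℕ) + k + 1 ≤ n - 1) := by
        rintro ⟨hh, -⟩
        omega
      simp [hEdef, h1, h2]
      intro h'; omega
    rw [Matrix.det_of_lowerTriangular E htri]
    simp [hEdef]
  rw [hmul, Matrix.det_mul, hdetE, mul_one]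

lemma Bmat_step (n : ℕ) (β : R) (x : Fin n → R) (k : ℕ) :
    (Bmat n β x (k + 1)).det = (Bmat n β x k).det := by
  classical
  set E : Matrix (Fin n) (Fin n) R := Matrix.of fun j c : Fin n =>
    if j = c then 1
    else if (j : ℕ) + 1 = (c : ℕ) ∧ k + 1 ≤ (c : ℕ) then -β else 0 with hEdef
  have hmul : Bmat n β x (k + 1) = Bmat n β x k * E := by
    ext r c
    rw [Matrix.mul_apply]
    by_cases h : k + 1 ≤ (c : ℕ)
    · have hc1 : (c : ℕ) - 1 < n := by omega
      let c' : Fin n := ⟨(c : ℕ) - 1, hc1⟩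
      have hc'ne : c' ≠ c := Fin.ne_of_val_ne (by show (c : ℕ) - 1 ≠ (c : ℕ); omega)
      have hsum : ∑ j, Bmat n β x k r j * E j c
          = Bmat n β x k r c * E c c + Bmat n β x k r c' * E c' c := by
        refine Finset.sum_eq_add_of_mem c c' (Finset.mem_univ _) (Finset.mem_univ _)
          hc'ne.symm ?_
        intro d _ hd
        have h1 : d ≠ c := hd.1
        have h2 : ¬((d : ℕ) + 1 = (c : ℕ)) := by
          intro hdc
          exact hd.2 (by simp only [c', Fin.ext_iff]; omega)
        simp [hEdef, h1, h2]
      rw [hsum]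
      have hEcc : E c c = 1 := by simp [hEdef]
      have hEc'c : E c' c = -β := by
        have h2 : (c' : ℕ) + 1 = (c : ℕ) := by simp only [c', Fin.ext_iff]; omega
        simp [hEdef, hc'ne, h2, h]
        intro h'; omega
      rw [hEcc, hEc'c]
      set m : ℕ := (c : ℕ) - (k + 1) with hm
      have e1 : (c : ℕ) - k = m + 1 := by omega
      have e2 : (c' : ℕ) = (c : ℕ) - 1 := rfl
      have e3 : ((c : ℕ) - 1) - k = m := by omega
      have e4 : n - 1 - ((c : ℕ) - 1) = (n - 1 - (c : ℕ)) + 1 := by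
        have := c.isLt; omega
      simp only [Bmat, Matrix.of_apply, e1, e2, e3, e4]
      rw [pow_succ (1 + β * x r) m, pow_succ (x r) (n - 1 - (c : ℕ))]
      ring
    · have hsum : ∑ j, Bmat n β x k r j * E j c
          = Bmat n β x k r c * E c c := by
        refine Finset.sum_eq_single_of_mem c (Finset.mem_univ _) ?_
        intro d _ hd
        have : ¬((d : ℕ) + 1 = (c : ℕ) ∧ k + 1 ≤ (c : ℕ)) := by
          intro hx; exact h hx.2
        simp [hEdef, hd, this]
        intro _ h'; omega
      rw [hsum]
      have hEcc : E c c = 1 := by simp [hEdef]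
      rw [hEcc, mul_one]
      have e1 : (c : ℕ) - (k + 1) = (c : ℕ) - k := by omega
      simp only [Bmat, Matrix.of_apply, e1]
  have hdetE : E.det = 1 := by
    have htri : E.BlockTriangular id := by
      intro i j hij
      have hij' : (j : Fin n) < i := hij
      have h1 : i ≠ j := by
        intro hh; subst hh; exact lt_irrefl _ hij'
      have h2 : ¬((i : ℕ) + 1 = (j : ℕ)) := by
        intro hh
        have : (j : ℕ) < (i : ℕ) := Fin.lt_iff_val_lt_val.mp hij'
        omega
      simp [hEdef, h1, h2]
    rw [Matrix.det_of_upperTriangular htri]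
    simp [hEdef]
  rw [hmul, Matrix.det_mul, hdetE, mul_one]

lemma Amat_det (n : ℕ) (β : R) (x : Fin n → R) (y : ℕ → R) :
    ∀ k, (Amat n β x y k).det = (Amat n β x y 0).det := by
  intro k
  induction k with
  | zero => rfl
  | succ k ih => rw [Amat_step, ih]

lemma Bmat_det (n : ℕ) (β : R) (x : Fin n → R) :
    ∀ k, (Bmat n β x k).det = (Bmat n β x 0).det := by
  intro k
  induction k with
  | zero => rfl
  | succ k ih => rw [Bmat_step, ih]

/-- Determinant of the reversed Vandermonde matrix. -/
lemma det_rev_vandermonde (n : ℕ) (x : Fin n → R) :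
    (Matrix.of fun r c : Fin n => x r ^ (n - 1 - (c : ℕ))).det
      = ∏ i : Fin n, ∏ j ∈ Finset.Ioi i, (x i - x j) := by
  classical
  have hsub : (Matrix.of fun r c : Fin n => x r ^ (n - 1 - (c : ℕ)))
      = (Matrix.vandermonde (fun i => x (Fin.rev i))).submatrix
          (Fin.revPerm : Equiv.Perm (Fin n)) (Fin.revPerm : Equiv.Perm (Fin n)) := by
    ext r c
    simp only [Matrix.submatrix_apply, Matrix.vandermonde_apply, Matrix.of_apply,
      Fin.revPerm_apply, Fin.rev_rev]
    congr 1
    have := c.isLt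
    simp only [Fin.val_rev]
    omega
  rw [hsub, Matrix.det_submatrix_equiv_self, Matrix.det_vandermonde]
  calc ∏ i : Fin n, ∏ j ∈ Finset.Ioi i, (x (Fin.rev j) - x (Fin.rev i))
      = ∏ i : Fin n, ∏ j ∈ Finset.Ioi (Fin.rev i), (x (Fin.rev j) - x (Fin.rev (Fin.rev i))) :=
        (Equiv.prod_comp (Fin.revPerm : Equiv.Perm (Fin n))
          (fun i => ∏ j ∈ Finset.Ioi i, (x (Fin.rev j) - x (Fin.rev i)))).symm
    _ = ∏ i : Fin n, ∏ j ∈ Finset.Iio i, (x j - x i) := by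
        refine Finset.prod_congr rfl fun i _ => ?_
        refine Finset.prod_nbij' Fin.rev Fin.rev ?_ ?_ ?_ ?_ ?_
        · intro a ha
          rw [Finset.mem_Iio]
          rw [Finset.mem_Ioi] at ha
          exact Fin.rev_lt_rev.mpr (by simpa using ha) |>.trans_eq (Fin.rev_rev i)
        · intro a ha
          rw [Finset.mem_Ioi]
          rw [Finset.mem_Iio] at ha
          exact (Fin.rev_lt_rev.mpr ha)
        · intro a _; exact Fin.rev_rev a
        · intro a _; exact Fin.rev_rev a
        · intro a _; rw [Fin.rev_rev]
    _ = ∏ i : Fin n, ∏ j ∈ Finset.Ioi i, (x i - x j) := by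
        refine (Finset.prod_comm' ?_).symm
        intro a b
        simp [Finset.mem_Ioi, Finset.mem_Iio]

end aux

/-- The determinant `det([x_r|y]^{n−c}(1+βx_r)^{c−1})_{1≤r,c≤n}` equals the Vandermonde product
`∏_{1≤i<j≤n} (x_i − x_j)`. -/
theorem stmt0 {R : Type*} [CommRing R] (n : ℕ) (hn : 1 ≤ n)
    (β : R) (x : Fin n → R) (y : ℕ → R) :
    (Matrix.of fun r c : Fin n =>
        fpow β y (x r) (n - 1 - (c : ℕ)) * (1 + β * x r) ^ (c : ℕ)).det
      = ∏ i : Fin n, ∏ j ∈ Finset.Ioi i, (x i - x j) := by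
  classical
  have h0 : (Matrix.of fun r c : Fin n =>
      fpow β y (x r) (n - 1 - (c : ℕ)) * (1 + β * x r) ^ (c : ℕ)) = Amat n β x y 0 := by
    ext r c
    simp [Amat]
  have h1 : Amat n β x y (n - 1) = Bmat n β x 0 := by
    ext r c
    have hc := c.isLt
    have e1 : min (n - 1) (n - 1 - (c : ℕ)) = n - 1 - (c : ℕ)  := by omega
    have e2 : n - 1 - (c : ℕ) - (n - 1) = 0 := by omega
    simp [Amat, Bmat, e1, e2, fpow]
  have h2 : Bmat n β x (n - 1) = Matrix.of fun r c : Fin n => x r ^ (n - 1 - (c : ℕ)) := by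
    ext r c
    have hc := c.isLt
    have e1 : (c : ℕ) - (n - 1) = 0 := by omega
    simp [Bmat, e1]
  rw [h0, ← Amat_det n β x y (n - 1), h1, ← Bmat_det n β x (n - 1), h2,
    det_rev_vandermonde]
end

section
/- (Gustafson–Milne identity.) Let λ = (λ_1 ≥ ⋯ ≥ λ_k ≥ 0) be a partition with k ≤ n parts satisfying λ_k ≥ n − k. Then s_{(λ_1−n+k, λ_2−n+k, …, λ_k−n+k)}(x_1,…,x_n) = Σ_{S ∈ binom([n],k)} s_λ(x_S) / (∏_{i∈S}∏_{j∈S̄}(x_i − x_j)), where the left-hand side is the Schur polynomial in n variables indexed by the partition (λ_1−n+k, …, λ_k−n+k) padded with zeros to length n. -/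
/-- The Schur polynomial given by the bialternant formula
`s_λ(x_1,…,x_n) = det(x_i^{λ_j+n−j})_{1≤i,j≤n} / ∏_{i<j}(x_i − x_j)`
(indices `i, j : Fin n` are 0-based, so `n − j` becomes `n − 1 − j`). -/
noncomputable def schur {F : Type*} [Field F] {n : ℕ} (lam : Fin n → ℕ) (x : Fin n → F) : F :=
  (Matrix.of fun i j : Fin n => x i ^ (lam j + (n - 1 - (j : ℕ)))).det
    / ∏ i : Fin n, ∏ j ∈ Finset.Ioi i, (x i - x j)


open Finset Equiv

def gmEmb (k m n : ℕ) (h : k + m = n) : Fin k ⊕ Fin m ≃ Fin n :=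
  finSumFinEquiv.trans (finCongr h)

@[simp] lemma gmEmb_inl_val {k m n : ℕ} (h : k + m = n) (a : Fin k) :
    (gmEmb k m n h (Sum.inl a) : ℕ) = a := by simp [gmEmb]

@[simp] lemma gmEmb_inr_val {k m n : ℕ} (h : k + m = n) (b : Fin m) :
    (gmEmb k m n h (Sum.inr b) : ℕ) = k + b := by simp [gmEmb]

noncomputable def gmPerm {n k m : ℕ} (h : k + m = n) (S : Finset (Fin n))
    (hS : S.card = k) (hSc : Sᶜ.card = m) : Equiv.Perm (Fin n) :=
  (gmEmb k m n h).symm.trans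
    (((S.orderIsoOfFin hS).toEquiv.sumCongr ((Sᶜ).orderIsoOfFin hSc).toEquiv).trans
      (((Equiv.refl _).sumCongr (Equiv.subtypeEquivRight (fun x => Finset.mem_compl))).trans
        (Equiv.sumCompl (· ∈ S))))

@[simp] lemma gmPerm_inl {n k m : ℕ} (h : k + m = n) (S : Finset (Fin n))
    (hS : S.card = k) (hSc : Sᶜ.card = m) (a : Fin k) :
    gmPerm h S hS hSc (gmEmb k m n h (Sum.inl a)) = (S.orderIsoOfFin hS a : Fin n) := by
  simp [gmPerm]

@[simp] lemma gmPerm_inr {n k m : ℕ} (h : k + m = n) (S : Finset (Fin n))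
    (hS : S.card = k) (hSc : Sᶜ.card = m) (b : Fin m) :
    gmPerm h S hS hSc (gmEmb k m n h (Sum.inr b)) = ((Sᶜ).orderIsoOfFin hSc b : Fin n) := by
  simp [gmPerm]

lemma gm_card_compl {n k m : ℕ} (h : k + m = n) {S : Finset (Fin n)} (hS : S.card = k) :
    Sᶜ.card = m := by
  rw [Finset.card_compl, hS, Fintype.card_fin]; omega

noncomputable def gmBig {n k m : ℕ} (h : k + m = n) :
    (Σ _S : {S : Finset (Fin n) // S.card = k}, Equiv.Perm (Fin k) × Equiv.Perm (Fin m)) →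
      Equiv.Perm (Fin n) :=
  fun p => gmPerm h p.1.1 p.1.2 (gm_card_compl h p.1.2) *
    (gmEmb k m n h).permCongr (Equiv.sumCongr p.2.1 p.2.2)

lemma gmBig_inl {n k m : ℕ} (h : k + m = n)
    (p : Σ _S : {S : Finset (Fin n) // S.card = k}, Equiv.Perm (Fin k) × Equiv.Perm (Fin m))
    (a : Fin k) :
    gmBig h p (gmEmb k m n h (Sum.inl a)) =
      (p.1.1.orderIsoOfFin p.1.2 (p.2.1 a) : Fin n) := by
  simp [gmBig, Equiv.permCongr_apply, Equiv.Perm.mul_apply]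

lemma gmBig_inr {n k m : ℕ} (h : k + m = n)
    (p : Σ _S : {S : Finset (Fin n) // S.card = k}, Equiv.Perm (Fin k) × Equiv.Perm (Fin m))
    (b : Fin m) :
    gmBig h p (gmEmb k m n h (Sum.inr b)) =
      ((p.1.1ᶜ).orderIsoOfFin (gm_card_compl h p.1.2) (p.2.2 b) : Fin n) := by
  simp [gmBig, Equiv.permCongr_apply, Equiv.Perm.mul_apply]

lemma gmBig_image {n k m : ℕ} (h : k + m = n)
    (p : Σ _S : {S : Finset (Fin n) // S.card = k}, Equiv.Perm (Fin k) × Equiv.Perm (Fin m)) :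
    Finset.image (fun a : Fin k => gmBig h p (gmEmb k m n h (Sum.inl a))) Finset.univ = p.1.1 := by
  ext i
  simp only [Finset.mem_image, Finset.mem_univ, true_and, gmBig_inl]
  constructor
  · rintro ⟨a, rfl⟩; exact (p.1.1.orderIsoOfFin p.1.2 (p.2.1 a)).2
  · intro hi
    exact ⟨p.2.1.symm ((p.1.1.orderIsoOfFin p.1.2).symm ⟨i, hi⟩), by simp⟩

lemma gmBig_bijective {n k m : ℕ} (h : k + m = n) (hk : k ≤ n) :
    Function.Bijective (gmBig (k := k) (m := m) h) := by
  rw [Fintype.bijective_iff_injective_and_card]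
  constructor
  · rintro ⟨⟨S, hS⟩, τ, ρ⟩ ⟨⟨S', hS'⟩, τ', ρ'⟩ hEq
    have h1 := gmBig_image h ⟨⟨S, hS⟩, τ, ρ⟩
    have h2 := gmBig_image h ⟨⟨S', hS'⟩, τ', ρ'⟩
    rw [hEq] at h1
    have hSS : S = S' := h1.symm.trans h2
    subst hSS
    have hττ : τ = τ' := by
      ext a
      have := congrArg (fun σ : Equiv.Perm (Fin n) => σ (gmEmb k m n h (Sum.inl a))) hEq
      simp only [gmBig_inl] at this
      exact Fin.val_eq_of_eq ((S.orderIsoOfFin hS).injective (Subtype.ext this))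
    have hρρ : ρ = ρ' := by
      ext b
      have := congrArg (fun σ : Equiv.Perm (Fin n) => σ (gmEmb k m n h (Sum.inr b))) hEq
      simp only [gmBig_inr] at this
      exact Fin.val_eq_of_eq (((Sᶜ).orderIsoOfFin (gm_card_compl h hS)).injective
        (Subtype.ext this))
    subst hττ; subst hρρ; rfl
  · simp only [Fintype.card_sigma, Fintype.card_prod, Fintype.card_perm, Fintype.card_fin,
      Finset.sum_const, smul_eq_mul]
    rw [Finset.card_univ, Fintype.card_finset_len, Fintype.card_fin]
    have hm : m = n - k := by omega
    subst hm
    rw [← Nat.choose_mul_factorial_mul_factorial hk]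
    ring

lemma prod_Ioi_ite {M : Type*} [CommMonoid M] {N : Type*} [Fintype N] [LinearOrder N]
    [LocallyFiniteOrderTop N] (f : N → N → M) :
    ∏ i : N, ∏ j ∈ Finset.Ioi i, f i j = ∏ i : N, ∏ j : N, if i < j then f i j else 1 := by
  refine Finset.prod_congr rfl fun i _ => ?_
  rw [← Finset.prod_filter]
  exact Finset.prod_congr (by ext j; simp) fun _ _ => rfl

lemma prod_Ioi_split {M : Type*} [CommRing M] {n k m : ℕ} (h : k + m = n)
    (f : Fin n → Fin n → M) :
    ∏ i : Fin n, ∏ j ∈ Finset.Ioi i, f i j =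
      ((∏ a : Fin k, ∏ a' ∈ Finset.Ioi a, f (gmEmb k m n h (Sum.inl a)) (gmEmb k m n h (Sum.inl a'))) *
       (∏ b : Fin m, ∏ b' ∈ Finset.Ioi b, f (gmEmb k m n h (Sum.inr b)) (gmEmb k m n h (Sum.inr b')))) *
      ∏ a : Fin k, ∏ b : Fin m, f (gmEmb k m n h (Sum.inl a)) (gmEmb k m n h (Sum.inr b)) := by
  rw [prod_Ioi_ite]
  rw [← Equiv.prod_comp (gmEmb k m n h) (fun i => ∏ j : Fin n, if i < j then f i j else 1)]
  have hin : ∀ u : Fin k ⊕ Fin m, (∏ j : Fin n, if gmEmb k m n h u < j then f (gmEmb k m n h u) j else 1)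
      = ∏ v : Fin k ⊕ Fin m, if gmEmb k m n h u < gmEmb k m n h v then f (gmEmb k m n h u) (gmEmb k m n h v) else 1 :=
    fun u => (Equiv.prod_comp (gmEmb k m n h) _).symm
  simp only [hin]
  have hlt1 : ∀ (a a' : Fin k), (gmEmb k m n h (Sum.inl a) < gmEmb k m n h (Sum.inl a')) ↔ a < a' := by
    intro a a'; rw [Fin.lt_def, Fin.lt_def, gmEmb_inl_val, gmEmb_inl_val]
  have hlt2 : ∀ (a : Fin k) (b : Fin m), gmEmb k m n h (Sum.inl a) < gmEmb k m n h (Sum.inr b) := by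
    intro a b; rw [Fin.lt_def, gmEmb_inl_val, gmEmb_inr_val]; omega
  have hlt3 : ∀ (b : Fin m) (a : Fin k), ¬ gmEmb k m n h (Sum.inr b) < gmEmb k m n h (Sum.inl a) := by
    intro b a; rw [Fin.lt_def, gmEmb_inr_val, gmEmb_inl_val]; omega
  have hlt4 : ∀ (b b' : Fin m), (gmEmb k m n h (Sum.inr b) < gmEmb k m n h (Sum.inr b')) ↔ b < b' := by
    intro b b'; rw [Fin.lt_def, Fin.lt_def, gmEmb_inr_val, gmEmb_inr_val]
    exact ⟨fun hh => by omega, fun hh => by omega⟩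
  simp only [Fintype.prod_sum_type]
  simp only [hlt1, hlt2, hlt3, hlt4, if_true, if_false]
  simp only [Finset.prod_const_one, one_mul, Finset.prod_mul_distrib]
  rw [← prod_Ioi_ite (fun a a' => f (gmEmb k m n h (Sum.inl a)) (gmEmb k m n h (Sum.inl a')))]
  rw [← prod_Ioi_ite (fun b b' => f (gmEmb k m n h (Sum.inr b)) (gmEmb k m n h (Sum.inr b')))]
  ring

lemma prod_Ioi_rev {M : Type*} [CommRing M] {m : ℕ} (g : Fin m → Fin m → M) :
    ∏ i : Fin m, ∏ j ∈ Finset.Ioi i, g (Fin.rev j) (Fin.rev i)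
      = ∏ i : Fin m, ∏ j ∈ Finset.Ioi i, g i j := by
  rw [prod_Ioi_ite, prod_Ioi_ite]
  rw [← Equiv.prod_comp Fin.revPerm
    (fun i => ∏ j : Fin m, if i < j then g (Fin.rev j) (Fin.rev i) else 1)]
  have step : ∀ i : Fin m,
      (∏ j : Fin m, if Fin.revPerm i < j then g (Fin.rev j) (Fin.rev (Fin.revPerm i)) else 1)
        = ∏ j : Fin m, if j < i then g j i else 1 := by
    intro i
    rw [← Equiv.prod_comp Fin.revPerm
      (fun j => if Fin.revPerm i < j then g (Fin.rev j) (Fin.rev (Fin.revPerm i)) else 1)]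
    refine Finset.prod_congr rfl fun j _ => ?_
    simp only [Fin.revPerm_apply, Fin.rev_rev, Fin.rev_lt_rev]
  simp only [step]
  rw [Finset.prod_comm]

lemma det_vandermonde_rev {R : Type*} [CommRing R] {m : ℕ} (z : Fin m → R) :
    (Matrix.of fun i j : Fin m => z i ^ (m - 1 - (j : ℕ))).det
      = ∏ i : Fin m, ∏ j ∈ Finset.Ioi i, (z i - z j) := by
  have h1 : (Matrix.of fun i j : Fin m => z i ^ (m - 1 - (j : ℕ)))
      = (Matrix.vandermonde (fun i => z (Fin.rev i))).submatrix Fin.revPerm Fin.revPerm := by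
    ext i j
    simp only [Matrix.submatrix_apply, Matrix.vandermonde_apply, Matrix.of_apply,
      Fin.revPerm_apply, Fin.rev_rev]
    congr 1
    rw [Fin.val_rev]
    omega
  rw [h1, Matrix.det_submatrix_equiv_self, Matrix.det_vandermonde]
  exact prod_Ioi_rev (fun i j => z i - z j)

lemma gm_laplace {F : Type*} [Field F] {n k m : ℕ} (h : k + m = n) (hk : k ≤ n)
    (M : Matrix (Fin n) (Fin n) F) :
    M.det = ∑ S : {S : Finset (Fin n) // S.card = k},
      ((Equiv.Perm.sign (gmPerm h S.1 S.2 (gm_card_compl h S.2)) : ℤ) : F) *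
        ((Matrix.of fun a a' : Fin k =>
            M ((S.1.orderIsoOfFin S.2 a : Fin n)) (gmEmb k m n h (Sum.inl a'))).det *
         (Matrix.of fun b b' : Fin m =>
            M ((S.1ᶜ.orderIsoOfFin (gm_card_compl h S.2) b : Fin n)) (gmEmb k m n h (Sum.inr b'))).det) := by
  rw [Matrix.det_apply']
  rw [← Function.Bijective.sum_comp (gmBig_bijective h hk)
    (fun σ => ((Equiv.Perm.sign σ : ℤ) : F) * ∏ i, M (σ i) i)]
  rw [← Finset.univ_sigma_univ, Finset.sum_sigma]
  refine Finset.sum_congr rfl fun S _ => ?_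
  rw [Fintype.sum_prod_type]
  have key : ∀ (τ : Equiv.Perm (Fin k)) (ρ : Equiv.Perm (Fin m)),
      ((Equiv.Perm.sign (gmBig h ⟨S, (τ, ρ)⟩) : ℤ) : F) * ∏ i, M (gmBig h ⟨S, (τ, ρ)⟩ i) i
        = ((Equiv.Perm.sign (gmPerm h S.1 S.2 (gm_card_compl h S.2)) : ℤ) : F) *
          ((((Equiv.Perm.sign τ : ℤ) : F) *
              ∏ a : Fin k, M ((S.1.orderIsoOfFin S.2 (τ a) : Fin n)) (gmEmb k m n h (Sum.inl a))) *
           (((Equiv.Perm.sign ρ : ℤ) : F) *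
              ∏ b : Fin m, M ((S.1ᶜ.orderIsoOfFin (gm_card_compl h S.2) (ρ b) : Fin n))
                (gmEmb k m n h (Sum.inr b)))) := by
    intro τ ρ
    have hsgn : Equiv.Perm.sign (gmBig h ⟨S, (τ, ρ)⟩)
        = Equiv.Perm.sign (gmPerm h S.1 S.2 (gm_card_compl h S.2)) *
          (Equiv.Perm.sign τ * Equiv.Perm.sign ρ) := by
      unfold gmBig
      rw [map_mul, Equiv.Perm.sign_permCongr, Equiv.Perm.sign_sumCongr]
    have hprod : ∏ i, M (gmBig h ⟨S, (τ, ρ)⟩ i) i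
        = (∏ a : Fin k, M ((S.1.orderIsoOfFin S.2 (τ a) : Fin n)) (gmEmb k m n h (Sum.inl a))) *
          ∏ b : Fin m, M ((S.1ᶜ.orderIsoOfFin (gm_card_compl h S.2) (ρ b) : Fin n))
            (gmEmb k m n h (Sum.inr b)) := by
      rw [← Equiv.prod_comp (gmEmb k m n h) (fun i => M (gmBig h ⟨S, (τ, ρ)⟩ i) i)]
      rw [Fintype.prod_sum_type]
      congr 1
      · exact Finset.prod_congr rfl fun a _ => by rw [gmBig_inl]
      · exact Finset.prod_congr rfl fun b _ => by rw [gmBig_inr]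
    rw [hsgn, hprod]
    push_cast
    ring
  simp only [key]
  rw [Matrix.det_apply', Matrix.det_apply']
  rw [Finset.sum_mul_sum]
  rw [Finset.mul_sum]
  refine Finset.sum_congr rfl fun τ _ => ?_
  rw [Finset.mul_sum]
  refine Finset.sum_congr rfl fun ρ _ => ?_
  simp only [Matrix.of_apply]

lemma gm_prod_reindex {F : Type*} [Field F] {n r : ℕ} (T : Finset (Fin n)) (hT : T.card = r)
    (g : Fin n → F) : ∏ i ∈ T, g i = ∏ a : Fin r, g (T.orderIsoOfFin hT a) := by
  rw [← Finset.prod_coe_sort]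
  exact (Equiv.prod_comp (T.orderIsoOfFin hT).toEquiv (fun u => g (u : Fin n))).symm

lemma gm_vprod_ne_zero {F : Type*} [Field F] {r : ℕ} (y : Fin r → F)
    (hy : Function.Injective y) :
    ∏ i : Fin r, ∏ j ∈ Finset.Ioi i, (y i - y j) ≠ 0 := by
  rw [Finset.prod_ne_zero_iff]
  intro i _
  rw [Finset.prod_ne_zero_iff]
  intro j hj
  exact sub_ne_zero_of_ne (fun hc => absurd (hy hc) (ne_of_lt (Finset.mem_Ioi.mp hj)))

/-- The Gustafson–Milne identity: for a partition `λ_1 ≥ ⋯ ≥ λ_k ≥ n − k`,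
`s_{(λ_1−n+k,…,λ_k−n+k)}(x_1,…,x_n) = Σ_{S ∈ binom([n],k)} s_λ(x_S) / ∏_{i∈S}∏_{j∈S̄}(x_i−x_j)`. -/
theorem stmt7 {F : Type*} [Field F] (n k : ℕ) (hkn : k ≤ n)
    (x : Fin n → F) (hx : Function.Injective x)
    (lam : Fin k → ℕ) (hlam : Antitone lam) (hk : 0 < k)
    (hmin : n - k ≤ lam ⟨k - 1, Nat.sub_lt hk Nat.one_pos⟩) :
    schur (fun i : Fin n => if h : (i : ℕ) < k then lam ⟨i, h⟩ - (n - k) else 0) x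
      = ∑ S : {S : Finset (Fin n) // S.card = k},
          schur lam (fun i : Fin k => x ((S.1.orderIsoOfFin S.2 i : Fin n)))
            / ∏ i ∈ S.1, ∏ j ∈ S.1ᶜ, (x i - x j) := by
  have hm : k + (n - k) = n := by omega
  have hge : ∀ a : Fin k, n - k ≤ lam a := by
    intro a
    refine le_trans hmin (hlam ?_)
    exact Fin.mk_le_mk.mpr (by omega)
  unfold schur
  rw [gm_laplace hm hkn]
  rw [Finset.sum_div]
  refine Finset.sum_congr rfl fun S _ => ?_
  set σ := gmPerm hm S.1 S.2 (gm_card_compl hm S.2) with hσdef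
  set s : Fin k → Fin n := fun a => (S.1.orderIsoOfFin S.2 a : Fin n) with hsdef
  set c : Fin (n - k) → Fin n :=
    fun b => (S.1ᶜ.orderIsoOfFin (gm_card_compl hm S.2) b : Fin n) with hcdef
  have hs_inj : Function.Injective s := fun a a' haa =>
    (S.1.orderIsoOfFin S.2).injective (Subtype.ext haa)
  have hc_inj : Function.Injective c := fun b b' hbb =>
    (S.1ᶜ.orderIsoOfFin (gm_card_compl hm S.2)).injective (Subtype.ext hbb)
  -- determinant of the first block is the Schur numerator
  have hD1 : (Matrix.of fun a a' : Fin k =>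
      (Matrix.of fun i j : Fin n =>
        x i ^ ((if h : (j : ℕ) < k then lam ⟨j, h⟩ - (n - k) else 0) + (n - 1 - (j : ℕ))))
        (s a) (gmEmb k (n - k) n hm (Sum.inl a'))).det
      = (Matrix.of fun i j : Fin k => x (s i) ^ (lam j + (k - 1 - (j : ℕ)))).det := by
    congr 1
    ext a a'
    simp only [Matrix.of_apply, gmEmb_inl_val]
    rw [dif_pos a'.isLt]
    simp only [Fin.eta, gmEmb_inl_val]
    congr 1
    have := hge a'
    have := a'.isLt
    omega
  -- determinant of the second block is a Vandermonde
  have hD2 : (Matrix.of fun b b' : Fin (n - k) =>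
      (Matrix.of fun i j : Fin n =>
        x i ^ ((if h : (j : ℕ) < k then lam ⟨j, h⟩ - (n - k) else 0) + (n - 1 - (j : ℕ))))
        (c b) (gmEmb k (n - k) n hm (Sum.inr b'))).det
      = ∏ i : Fin (n - k), ∏ j ∈ Finset.Ioi i, (x (c i) - x (c j)) := by
    rw [← det_vandermonde_rev (fun b => x (c b))]
    congr 1
    ext b b'
    simp only [Matrix.of_apply, gmEmb_inr_val]
    rw [dif_neg (by omega)]
    congr 1
    have := b'.isLt
    omega
  -- the Vandermonde factorization
  have hsplit : (∏ i : Fin k, ∏ j ∈ Finset.Ioi i, (x (s i) - x (s j))) *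
        (∏ i : Fin (n - k), ∏ j ∈ Finset.Ioi i, (x (c i) - x (c j))) *
        (∏ a : Fin k, ∏ b : Fin (n - k), (x (s a) - x (c b)))
      = ((Equiv.Perm.sign σ : ℤ) : F) *
          ∏ i : Fin n, ∏ j ∈ Finset.Ioi i, (x i - x j) := by
    have h1 : ∏ i : Fin n, ∏ j ∈ Finset.Ioi i, (x (σ i) - x (σ j))
        = ((Equiv.Perm.sign σ : ℤ) : F) * ∏ i : Fin n, ∏ j ∈ Finset.Ioi i, (x i - x j) := by
      rw [← det_vandermonde_rev x, ← det_vandermonde_rev (fun i => x (σ i))]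
      have : (Matrix.of fun i j : Fin n => x (σ i) ^ (n - 1 - (j : ℕ)))
          = (Matrix.of fun i j : Fin n => x i ^ (n - 1 - (j : ℕ))).submatrix σ id := by
        ext i j; simp
      rw [this, Matrix.det_permute]
    rw [← h1]
    rw [prod_Ioi_split hm (fun i j => x (σ i) - x (σ j))]
    simp only [hσdef, gmPerm_inl, gmPerm_inr]
    rfl
  -- the cross product is the compl product
  have hP : ∏ i ∈ S.1, ∏ j ∈ S.1ᶜ, (x i - x j)
      = ∏ a : Fin k, ∏ b : Fin (n - k), (x (s a) - x (c b)) := by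
    rw [gm_prod_reindex S.1 S.2 (fun i => ∏ j ∈ S.1ᶜ, (x i - x j))]
    refine Finset.prod_congr rfl fun a _ => ?_
    exact gm_prod_reindex S.1ᶜ (gm_card_compl hm S.2) (fun j => x (s a) - x j)
  rw [hD1, hD2, hP]
  -- nonvanishing
  have hVs : (∏ i : Fin k, ∏ j ∈ Finset.Ioi i, (x (s i) - x (s j))) ≠ 0 :=
    gm_vprod_ne_zero _ (hx.comp hs_inj)
  have hVc : (∏ i : Fin (n - k), ∏ j ∈ Finset.Ioi i, (x (c i) - x (c j))) ≠ 0 :=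
    gm_vprod_ne_zero _ (hx.comp hc_inj)
  have hCross : (∏ a : Fin k, ∏ b : Fin (n - k), (x (s a) - x (c b))) ≠ 0 := by
    rw [Finset.prod_ne_zero_iff]
    intro a _
    rw [Finset.prod_ne_zero_iff]
    intro b _
    refine sub_ne_zero_of_ne fun hc => ?_
    have h1 : s a ∈ S.1 := (S.1.orderIsoOfFin S.2 a).2
    have h2 : c b ∈ S.1ᶜ := (S.1ᶜ.orderIsoOfFin (gm_card_compl hm S.2) b).2
    rw [← hx hc] at h2
    exact (Finset.mem_compl.mp h2) h1
  -- final algebra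
  set N : F := (Matrix.of fun i j : Fin k => x (s i) ^ (lam j + (k - 1 - (j : ℕ)))).det
  set Vs : F := ∏ i : Fin k, ∏ j ∈ Finset.Ioi i, (x (s i) - x (s j))
  set Vc : F := ∏ i : Fin (n - k), ∏ j ∈ Finset.Ioi i, (x (c i) - x (c j))
  set Cr : F := ∏ a : Fin k, ∏ b : Fin (n - k), (x (s a) - x (c b))
  set V : F := ∏ i : Fin n, ∏ j ∈ Finset.Ioi i, (x i - x j)
  rcases Int.units_eq_one_or (Equiv.Perm.sign σ) with hsg | hsg <;> rw [hsg] at hsplit ⊢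
  · norm_num at hsplit ⊢
    rw [← hsplit]
    field_simp
  · norm_num at hsplit ⊢
    have hV : V = -(Vs * Vc * Cr) := by linear_combination hsplit
    rw [hV]
    field_simp
end

section
/- (Fehér–Némethi–Rimányi identity.) Let 0 ≤ k ≤ n and m ≥ k be integers, and let λ = (λ_1 ≥ ⋯ ≥ λ_k ≥ 0) be a partition with λ_1 ≤ m − k. Set μ = (m−k, …, m−k, λ_1, …, λ_k), the partition with n parts whose first n−k parts equal m−k followed by the parts of λ. Then s_μ(x_1,…,x_n) = Σ_{S ∈ binom([n],k)} s_λ(x_S) · (∏_{j∈S̄} x_j^m) / (∏_{i∈S}∏_{j∈S̄}(x_j − x_i)). -/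
open Finset Equiv Matrix

namespace FNRaux

variable {F : Type*} [Field F]

/-- Double product over `Ioi` as a product over the set of ordered pairs. -/
lemma prod_pairs {N : ℕ} (g : Fin N → Fin N → F) :
    ∏ i, ∏ j ∈ Finset.Ioi i, g i j
      = ∏ q ∈ Finset.univ.filter (fun q : Fin N × Fin N => q.1 < q.2), g q.1 q.2 := by
  rw [Finset.prod_sigma' Finset.univ (fun i => Finset.Ioi i) (fun i j => g i j)]
  refine Finset.prod_nbij' (fun q => (q.1, q.2)) (fun q => ⟨q.1, q.2⟩) ?_ ?_ ?_ ?_ ?_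
  · rintro ⟨i, j⟩ h
    simp only [Finset.mem_sigma, Finset.mem_univ, Finset.mem_Ioi, true_and] at h
    simp [h]
  · rintro ⟨i, j⟩ h
    simp only [Finset.mem_filter, Finset.mem_univ, true_and] at h
    simp [h]
  · rintro ⟨i, j⟩ _; rfl
  · rintro ⟨i, j⟩ _; rfl
  · rintro ⟨i, j⟩ _; rfl

/-- The reversed Vandermonde determinant. -/
lemma det_rev_vandermonde {N : ℕ} (v : Fin N → F) :
    (Matrix.of fun i j : Fin N => v i ^ (N - 1 - (j : ℕ))).det
      = ∏ i, ∏ j ∈ Finset.Ioi i, (v i - v j) := by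
  have h : (Matrix.of fun i j : Fin N => v i ^ (N - 1 - (j : ℕ)))
      = (Matrix.vandermonde (v ∘ Fin.rev)).submatrix Fin.revPerm Fin.revPerm := by
    ext i j
    simp only [Matrix.of_apply, Matrix.submatrix_apply, Matrix.vandermonde_apply,
      Function.comp_apply, Fin.revPerm_apply, Fin.rev_rev, Fin.val_rev]
    congr 1
    omega
  rw [h, Matrix.det_submatrix_equiv_self, Matrix.det_vandermonde]
  rw [prod_pairs, prod_pairs]
  refine Finset.prod_nbij' (fun q => (q.2.rev, q.1.rev)) (fun q => (q.2.rev, q.1.rev))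
    ?_ ?_ ?_ ?_ ?_
  · rintro ⟨i, j⟩ h
    simp only [Finset.mem_filter, Finset.mem_univ, true_and] at h ⊢
    rw [Fin.rev_lt_rev]
    exact h
  · rintro ⟨i, j⟩ h
    simp only [Finset.mem_filter, Finset.mem_univ, true_and] at h ⊢
    rw [Fin.rev_lt_rev]
    exact h
  · rintro ⟨i, j⟩ _; simp
  · rintro ⟨i, j⟩ _; simp
  · rintro ⟨i, j⟩ h
    simp only [Function.comp_apply, Fin.rev_rev]


lemma prod_ite_Ioi {N : ℕ} (f : Fin N → F) (i : Fin N) :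
    ∏ j ∈ Finset.Ioi i, f j = ∏ j, if i < j then f j else 1 := by
  rw [show Finset.Ioi i = Finset.univ.filter (fun j => i < j) by ext j; simp,
    Finset.prod_filter]

/-- Splitting a Vandermonde-type double product along `Fin p ⊕ Fin k`. -/
lemma prod_split {p k : ℕ} (g : Fin (p + k) → Fin (p + k) → F) :
    ∏ i, ∏ j ∈ Finset.Ioi i, g i j =
      ((∏ a : Fin p, ∏ a' ∈ Finset.Ioi a, g (Fin.castAdd k a) (Fin.castAdd k a')) *
       ∏ b : Fin k, ∏ b' ∈ Finset.Ioi b, g (Fin.natAdd p b) (Fin.natAdd p b')) *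
      ∏ a : Fin p, ∏ b : Fin k, g (Fin.castAdd k a) (Fin.natAdd p b) := by
  have key : ∀ i : Fin (p + k), ∏ j ∈ Finset.Ioi i, g i j = ∏ j, if i < j then g i j else 1 :=
    fun i => prod_ite_Ioi (g i) i
  calc ∏ i, ∏ j ∈ Finset.Ioi i, g i j
      = ∏ i, ∏ j, if i < j then g i j else 1 := Finset.prod_congr rfl fun i _ => key i
    _ = ∏ s : Fin p ⊕ Fin k, ∏ t : Fin p ⊕ Fin k,
          if finSumFinEquiv s < finSumFinEquiv t then g (finSumFinEquiv s) (finSumFinEquiv t)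
          else 1 := by
        rw [← Equiv.prod_comp finSumFinEquiv (fun i => ∏ j, if i < j then g i j else 1)]
        refine Finset.prod_congr rfl fun s _ => ?_
        rw [← Equiv.prod_comp finSumFinEquiv
          (fun j => if finSumFinEquiv s < j then g (finSumFinEquiv s) j else 1)]
    _ = _ := by
        rw [Fintype.prod_sum_type]
        have hll : ∀ a a' : Fin p, (Fin.castAdd k a < Fin.castAdd k a') = (a < a') := by
          intro a a'; rw [eq_iff_iff, Fin.lt_def, Fin.lt_def]; simp
        have hlr : ∀ (a : Fin p) (b : Fin k),
            (Fin.castAdd k a < Fin.natAdd p b) = True := by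
          intro a b; simp only [Fin.lt_def, Fin.coe_castAdd, Fin.coe_natAdd, eq_iff_iff,
            iff_true]
          omega
        have hrl : ∀ (b : Fin k) (a : Fin p),
            (Fin.natAdd p b < Fin.castAdd k a) = False := by
          intro b a; simp only [Fin.lt_def, Fin.coe_castAdd, Fin.coe_natAdd, eq_iff_iff,
            iff_false, not_lt]
          omega
        have hrr : ∀ b b' : Fin k, (Fin.natAdd p b < Fin.natAdd p b') = (b < b') := by
          intro b b'; rw [eq_iff_iff, Fin.lt_def, Fin.lt_def]; simp
        have h1 : ∀ a : Fin p,
            (∏ t : Fin p ⊕ Fin k, if finSumFinEquiv (Sum.inl a) < finSumFinEquiv t then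
                g (finSumFinEquiv (Sum.inl a)) (finSumFinEquiv t) else 1)
            = (∏ a' ∈ Finset.Ioi a, g (Fin.castAdd k a) (Fin.castAdd k a')) *
              ∏ b : Fin k, g (Fin.castAdd k a) (Fin.natAdd p b) := by
          intro a
          rw [Fintype.prod_sum_type]
          simp only [finSumFinEquiv_apply_left, finSumFinEquiv_apply_right, hll, hlr, if_true]
          rw [prod_ite_Ioi (fun a' => g (Fin.castAdd k a) (Fin.castAdd k a')) a]
        have h2 : ∀ b : Fin k,
            (∏ t : Fin p ⊕ Fin k, if finSumFinEquiv (Sum.inr b) < finSumFinEquiv t then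
                g (finSumFinEquiv (Sum.inr b)) (finSumFinEquiv t) else 1)
            = ∏ b' ∈ Finset.Ioi b, g (Fin.natAdd p b) (Fin.natAdd p b') := by
          intro b
          rw [Fintype.prod_sum_type]
          simp only [finSumFinEquiv_apply_left, finSumFinEquiv_apply_right, hrl, hrr,
            if_false, Finset.prod_const_one, one_mul]
          rw [prod_ite_Ioi (fun b' => g (Fin.natAdd p b) (Fin.natAdd p b')) b]
        rw [Finset.prod_congr rfl fun a _ => h1 a, Finset.prod_congr rfl fun b _ => h2 b,
          Finset.prod_mul_distrib]
        ring

variable {F : Type*} [Field F] {p k : ℕ}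

lemma compl_card (S : Finset (Fin (p + k))) (hS : S.card = k) : Sᶜ.card = p := by
  rw [Finset.card_compl, hS]
  simp

/-- The increasing enumeration of `S`. -/
noncomputable def uu (S : Finset (Fin (p + k))) (hS : S.card = k) (b : Fin k) : Fin (p + k) :=
  (S.orderIsoOfFin hS b : Fin (p + k))

/-- The increasing enumeration of `Sᶜ`. -/
noncomputable def ww (S : Finset (Fin (p + k))) (hS : S.card = k) (a : Fin p) : Fin (p + k) :=
  (Sᶜ.orderIsoOfFin (compl_card S hS) a : Fin (p + k))

lemma uu_mem (S : Finset (Fin (p + k))) (hS : S.card = k) (b : Fin k) : uu S hS b ∈ S :=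
  (S.orderIsoOfFin hS b).2

lemma ww_mem (S : Finset (Fin (p + k))) (hS : S.card = k) (a : Fin p) : ww S hS a ∈ Sᶜ :=
  (Sᶜ.orderIsoOfFin (compl_card S hS) a).2

lemma uu_inj (S : Finset (Fin (p + k))) (hS : S.card = k) : Function.Injective (uu S hS) :=
  fun _ _ h => (S.orderIsoOfFin hS).injective (Subtype.ext h)

lemma ww_inj (S : Finset (Fin (p + k))) (hS : S.card = k) : Function.Injective (ww S hS) :=
  fun _ _ h => (Sᶜ.orderIsoOfFin (compl_card S hS)).injective (Subtype.ext h)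

/-- The equivalence `Fin p ⊕ Fin k ≃ Fin (p+k)` sending `inl` to `Sᶜ` and `inr` to `S`,
increasingly. -/
noncomputable def eS (S : Finset (Fin (p + k))) (hS : S.card = k) :
    (Fin p ⊕ Fin k) ≃ Fin (p + k) :=
  Equiv.ofBijective (Sum.elim (ww S hS) (uu S hS)) (by
    rw [Fintype.bijective_iff_injective_and_card]
    refine ⟨?_, by simp⟩
    rintro (a | b) (a' | b') h <;> simp only [Sum.elim_inl, Sum.elim_inr] at h
    · exact congrArg Sum.inl (ww_inj S hS h)
    · exact absurd (uu_mem S hS b') (Finset.mem_compl.mp (h ▸ ww_mem S hS a))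
    · exact absurd (uu_mem S hS b) (Finset.mem_compl.mp (h.symm ▸ ww_mem S hS a'))
    · exact congrArg Sum.inr (uu_inj S hS h))

@[simp] lemma eS_inl (S : Finset (Fin (p + k))) (hS : S.card = k) (a : Fin p) :
    eS S hS (Sum.inl a) = ww S hS a := rfl

@[simp] lemma eS_inr (S : Finset (Fin (p + k))) (hS : S.card = k) (b : Fin k) :
    eS S hS (Sum.inr b) = uu S hS b := rfl

/-- The permutation of `Fin (p+k)` sending the first block to `Sᶜ` and the second to `S`. -/
noncomputable def piS (S : Finset (Fin (p + k))) (hS : S.card = k) : Equiv.Perm (Fin (p + k)) :=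
  finSumFinEquiv.symm.trans (eS S hS)

@[simp] lemma piS_castAdd (S : Finset (Fin (p + k))) (hS : S.card = k) (a : Fin p) :
    piS S hS (Fin.castAdd k a) = ww S hS a := by
  simp only [piS, Equiv.trans_apply, finSumFinEquiv_symm_apply_castAdd, eS_inl]

@[simp] lemma piS_natAdd (S : Finset (Fin (p + k))) (hS : S.card = k) (b : Fin k) :
    piS S hS (Fin.natAdd p b) = uu S hS b := by
  simp only [piS, Equiv.trans_apply, finSumFinEquiv_symm_apply_natAdd, eS_inr]

/-- The permutation indexed by `(S, τ, ρ)` in the Laplace expansion. -/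
noncomputable def Phi
    (z : Σ _ : {S : Finset (Fin (p + k)) // S.card = k},
      Equiv.Perm (Fin p) × Equiv.Perm (Fin k)) : Equiv.Perm (Fin (p + k)) :=
  finSumFinEquiv.symm.trans ((Equiv.sumCongr z.2.1 z.2.2).trans (eS z.1.1 z.1.2))

lemma Phi_castAdd (z : Σ _ : {S : Finset (Fin (p + k)) // S.card = k},
      Equiv.Perm (Fin p) × Equiv.Perm (Fin k)) (a : Fin p) :
    Phi z (Fin.castAdd k a) = ww z.1.1 z.1.2 (z.2.1 a) := by
  simp only [Phi, Equiv.trans_apply, finSumFinEquiv_symm_apply_castAdd,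
    Equiv.sumCongr_apply, Sum.map_inl, eS_inl]

lemma Phi_natAdd (z : Σ _ : {S : Finset (Fin (p + k)) // S.card = k},
      Equiv.Perm (Fin p) × Equiv.Perm (Fin k)) (b : Fin k) :
    Phi z (Fin.natAdd p b) = uu z.1.1 z.1.2 (z.2.2 b) := by
  simp only [Phi, Equiv.trans_apply, finSumFinEquiv_symm_apply_natAdd,
    Equiv.sumCongr_apply, Sum.map_inr, eS_inr]

lemma Phi_eq (z : Σ _ : {S : Finset (Fin (p + k)) // S.card = k},
      Equiv.Perm (Fin p) × Equiv.Perm (Fin k)) :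
    Phi z = piS z.1.1 z.1.2 * finSumFinEquiv.permCongr (Equiv.sumCongr z.2.1 z.2.2) := by
  ext i
  simp only [Phi, Equiv.trans_apply, Equiv.Perm.coe_mul, Function.comp_apply,
    Equiv.permCongr_apply, piS, Equiv.symm_apply_apply]

lemma sign_Phi (z : Σ _ : {S : Finset (Fin (p + k)) // S.card = k},
      Equiv.Perm (Fin p) × Equiv.Perm (Fin k)) :
    Equiv.Perm.sign (Phi z)
      = Equiv.Perm.sign (piS z.1.1 z.1.2) * (Equiv.Perm.sign z.2.1 * Equiv.Perm.sign z.2.2) := by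
  rw [Phi_eq, Equiv.Perm.sign_mul, Equiv.Perm.sign_permCongr, Equiv.Perm.sign_sumCongr]

/-- Generalized Laplace expansion along the column blocks. -/
lemma laplace (A : Matrix (Fin (p + k)) (Fin (p + k)) F) :
    A.det = ∑ S : {S : Finset (Fin (p + k)) // S.card = k},
      ((Equiv.Perm.sign (piS S.1 S.2) : ℤ) : F) *
        (Matrix.of fun a' a : Fin p => A (ww S.1 S.2 a') (Fin.castAdd k a)).det *
        (Matrix.of fun b' b : Fin k => A (uu S.1 S.2 b') (Fin.natAdd p b)).det := by
  classical
  have Φ_image : ∀ z : Σ _ : {S : Finset (Fin (p + k)) // S.card = k},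
      Equiv.Perm (Fin p) × Equiv.Perm (Fin k),
      Finset.image (fun b => Phi z (Fin.natAdd p b)) Finset.univ = z.1.1 := by
    intro z
    refine Finset.eq_of_subset_of_card_le ?_ ?_
    · intro i hi
      obtain ⟨b, -, rfl⟩ := Finset.mem_image.mp hi
      rw [Phi_natAdd]
      exact uu_mem _ _ _
    · rw [Finset.card_image_of_injective _
        (fun b b' h => by
          rw [Phi_natAdd, Phi_natAdd] at h
          exact z.2.2.injective (uu_inj _ _ h))]
      rw [z.1.2, Finset.card_univ, Fintype.card_fin]
  have Φ_inj : Function.Injective (Phi (p := p) (k := k)) := by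
    rintro ⟨S₁, τ, ρ⟩ ⟨S₂, τ', ρ'⟩ h
    obtain rfl : S₁ = S₂ := Subtype.ext (by
      rw [← Φ_image ⟨S₁, τ, ρ⟩, ← Φ_image ⟨S₂, τ', ρ'⟩, h])
    have hτ : τ = τ' := by
      refine Equiv.ext fun a => ?_
      have h2 := DFunLike.congr_fun h (Fin.castAdd k a)
      rw [Phi_castAdd, Phi_castAdd] at h2
      exact ww_inj _ _ h2
    have hρ : ρ = ρ' := by
      refine Equiv.ext fun b => ?_
      have h2 := DFunLike.congr_fun h (Fin.natAdd p b)
      rw [Phi_natAdd, Phi_natAdd] at h2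
      exact uu_inj _ _ h2
    rw [hτ, hρ]
  have Φ_bij : Function.Bijective (Phi (p := p) (k := k)) := by
    rw [Fintype.bijective_iff_injective_and_card]
    refine ⟨Φ_inj, ?_⟩
    rw [Fintype.card_sigma]
    simp only [Fintype.card_prod, Fintype.card_perm, Fintype.card_fin,
      Finset.sum_const, Finset.card_univ, smul_eq_mul]
    rw [Fintype.card_finset_len, Fintype.card_fin]
    have h := Nat.choose_mul_factorial_mul_factorial (Nat.le_add_left k p)
    rw [Nat.add_sub_cancel] at h
    calc (p + k).choose k * (Nat.factorial p * Nat.factorial k)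
        = (p + k).choose k * Nat.factorial k * Nat.factorial p := by ring
      _ = Nat.factorial (p + k) := h
  rw [Matrix.det_apply']
  rw [← Fintype.sum_bijective _ Φ_bij _ _ (fun z => rfl)]
  rw [← Finset.univ_sigma_univ, Finset.sum_sigma]
  refine Finset.sum_congr rfl fun S _ => ?_
  rw [Fintype.sum_prod_type]
  rw [Matrix.det_apply', Matrix.det_apply']
  have hexp : ∀ (c : F) (f : Equiv.Perm (Fin p) → F) (g : Equiv.Perm (Fin k) → F),
      (c * ∑ τ, f τ) * ∑ ρ, g ρ = ∑ τ, ∑ ρ, c * f τ * g ρ := by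
    intro c f g
    rw [mul_assoc, Finset.sum_mul_sum, Finset.mul_sum]
    refine Finset.sum_congr rfl fun τ _ => ?_
    rw [Finset.mul_sum]
    exact Finset.sum_congr rfl fun ρ _ => by ring
  rw [hexp]
  refine Finset.sum_congr rfl fun τ _ => Finset.sum_congr rfl fun ρ _ => ?_
  have hsign := sign_Phi ⟨S, τ, ρ⟩
  have hprod : ∏ i, A (Phi ⟨S, τ, ρ⟩ i) i
      = (∏ a : Fin p, A (ww S.1 S.2 (τ a)) (Fin.castAdd k a)) *
        ∏ b : Fin k, A (uu S.1 S.2 (ρ b)) (Fin.natAdd p b) := by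
    rw [← Equiv.prod_comp finSumFinEquiv (fun i => A (Phi ⟨S, τ, ρ⟩ i) i),
      Fintype.prod_sum_type]
    simp only [finSumFinEquiv_apply_left, finSumFinEquiv_apply_right, Phi_castAdd, Phi_natAdd]
  rw [hprod, hsign]
  simp only [Matrix.of_apply, Units.val_mul, Int.cast_mul]
  ring

lemma prod_ww_eq (S : Finset (Fin (p + k))) (hS : S.card = k) (f : Fin (p + k) → F) :
    ∏ a, f (ww S hS a) = ∏ j ∈ Sᶜ, f j :=
  (Equiv.prod_comp (Sᶜ.orderIsoOfFin (compl_card S hS)).toEquiv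
    (fun j : {x // x ∈ Sᶜ} => f j)).trans (Finset.prod_coe_sort Sᶜ f)

lemma prod_uu_eq (S : Finset (Fin (p + k))) (hS : S.card = k) (f : Fin (p + k) → F) :
    ∏ b, f (uu S hS b) = ∏ j ∈ S, f j :=
  (Equiv.prod_comp (S.orderIsoOfFin hS).toEquiv
    (fun j : {x // x ∈ S} => f j)).trans (Finset.prod_coe_sort S f)

lemma sign_vandermonde_split (x : Fin (p + k) → F) (S : Finset (Fin (p + k)))
    (hS : S.card = k) :
    ((Equiv.Perm.sign (piS S hS) : ℤ) : F) * ∏ i, ∏ j ∈ Finset.Ioi i, (x j - x i)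
      = ((∏ a, ∏ a' ∈ Finset.Ioi a, (x (ww S hS a') - x (ww S hS a))) *
         ∏ b, ∏ b' ∈ Finset.Ioi b, (x (uu S hS b') - x (uu S hS b))) *
        ∏ a, ∏ b, (x (uu S hS b) - x (ww S hS a)) := by
  have h1 : ((Matrix.vandermonde x).submatrix (piS S hS) id) = Matrix.vandermonde (x ∘ piS S hS) := by
    ext i j
    simp [Matrix.vandermonde_apply]
  have h2 := Matrix.det_permute (piS S hS) (Matrix.vandermonde x)
  rw [h1, Matrix.det_vandermonde, Matrix.det_vandermonde] at h2
  simp only [Function.comp_apply] at h2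
  rw [← h2, prod_split (g := fun i j => x (piS S hS j) - x (piS S hS i))]
  simp only [piS_castAdd, piS_natAdd]

lemma prod_prod_neg {ι κ : Type*} (s : Finset ι) (t : ι → Finset κ) (f g : ι → κ → F)
    (hfg : ∀ i ∈ s, ∀ j ∈ t i, f i j = - g i j) :
    ∏ i ∈ s, ∏ j ∈ t i, f i j = (∏ i ∈ s, ∏ j ∈ t i, (-1 : F)) * ∏ i ∈ s, ∏ j ∈ t i, g i j := by
  rw [← Finset.prod_mul_distrib]
  refine Finset.prod_congr rfl fun i hi => ?_
  rw [← Finset.prod_mul_distrib]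
  refine Finset.prod_congr rfl fun j hj => ?_
  rw [hfg i hi j hj]
  ring

lemma key_sign (x : Fin (p + k) → F) (S : Finset (Fin (p + k))) (hS : S.card = k) :
    ((Equiv.Perm.sign (piS S hS) : ℤ) : F) *
      ((∏ a, ∏ a' ∈ Finset.Ioi a, (x (ww S hS a) - x (ww S hS a'))) *
       (∏ b, ∏ b' ∈ Finset.Ioi b, (x (uu S hS b) - x (uu S hS b'))) *
       ∏ a, ∏ b, (x (ww S hS a) - x (uu S hS b)))
    = ∏ i, ∏ j ∈ Finset.Ioi i, (x i - x j) := by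
  have e1 := prod_prod_neg Finset.univ (fun a : Fin p => Finset.Ioi a)
    (fun a a' => x (ww S hS a) - x (ww S hS a')) (fun a a' => x (ww S hS a') - x (ww S hS a))
    (fun _ _ _ _ => by ring)
  have e2 := prod_prod_neg Finset.univ (fun b : Fin k => Finset.Ioi b)
    (fun b b' => x (uu S hS b) - x (uu S hS b')) (fun b b' => x (uu S hS b') - x (uu S hS b))
    (fun _ _ _ _ => by ring)
  have e3 := prod_prod_neg Finset.univ (fun _ : Fin p => (Finset.univ : Finset (Fin k)))
    (fun a b => x (ww S hS a) - x (uu S hS b)) (fun a b => x (uu S hS b) - x (ww S hS a))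
    (fun _ _ _ _ => by ring)
  have e4 := prod_prod_neg Finset.univ (fun i : Fin (p + k) => Finset.Ioi i)
    (fun i j => x i - x j) (fun i j => x j - x i) (fun _ _ _ _ => by ring)
  have esign := prod_split (F := F) (p := p) (k := k) (g := fun _ _ => -1)
  have hL3 := sign_vandermonde_split x S hS
  have hsq : ((Equiv.Perm.sign (piS S hS) : ℤ) : F) *
      ((Equiv.Perm.sign (piS S hS) : ℤ) : F) = 1 := by
    rw [← Int.cast_mul, ← Units.val_mul, Int.units_mul_self, Units.val_one, Int.cast_one]
  rw [e1, e2, e3, e4, esign]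
  linear_combination (∏ a : Fin p, ∏ a' ∈ Finset.Ioi a, (-1 : F)) *
      (∏ b : Fin k, ∏ b' ∈ Finset.Ioi b, (-1 : F)) *
      (∏ _a : Fin p, ∏ _b : Fin k, (-1 : F)) *
      ((∏ i, ∏ j ∈ Finset.Ioi i, (x j - x i)) * hsq -
        ((Equiv.Perm.sign (piS S hS) : ℤ) : F) * hL3)

end FNRaux


/-- The Fehér–Némethi–Rimányi identity: with `μ = (m−k,…,m−k,λ_1,…,λ_k)` (`m−k` repeated
`n−k` times), `s_μ(x) = Σ_{S ∈ binom([n],k)} s_λ(x_S) ∏_{j∈S̄} x_j^m / ∏_{i∈S}∏_{j∈S̄}(x_j−x_i)`. -/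
theorem stmt8 {F : Type*} [Field F] (n k m : ℕ) (hkn : k ≤ n) (hkm : k ≤ m)
    (x : Fin n → F) (hx : Function.Injective x)
    (lam : Fin k → ℕ) (hlam : Antitone lam) (hlam1 : ∀ i, lam i ≤ m - k) :
    schur (fun i : Fin n =>
        if h : (i : ℕ) < n - k then m - k
        else lam ⟨(i : ℕ) - (n - k), by have := i.isLt; omega⟩) x
      = ∑ S : {S : Finset (Fin n) // S.card = k},
          schur lam (fun i : Fin k => x ((S.1.orderIsoOfFin S.2 i : Fin n)))
            * ((∏ j ∈ S.1ᶜ, x j ^ m) / ∏ i ∈ S.1, ∏ j ∈ S.1ᶜ, (x j - x i)) := by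
  obtain ⟨p, rfl⟩ : ∃ p, n = p + k := ⟨n - k, by omega⟩
  have hne : ∀ i j : Fin (p + k), i ≠ j → x i - x j ≠ 0 :=
    fun i j h => sub_ne_zero.mpr fun e => h (hx e)
  have hDx : (∏ i : Fin (p + k), ∏ j ∈ Finset.Ioi i, (x i - x j)) ≠ 0 :=
    Finset.prod_ne_zero_iff.mpr fun i _ => Finset.prod_ne_zero_iff.mpr fun j hj =>
      hne i j (Finset.mem_Ioi.mp hj).ne
  simp only [schur]
  rw [div_eq_iff hDx]
  conv_lhs => rw [FNRaux.laplace]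
  rw [Finset.sum_mul]
  refine Finset.sum_congr rfl fun S _ => ?_
  obtain ⟨T, hT⟩ := S
  simp only [Matrix.of_apply]
  have hBexp : ∀ a : Fin p,
      ((if h : (↑(Fin.castAdd k a) : ℕ) < p + k - k then m - k
        else lam ⟨(↑(Fin.castAdd k a) : ℕ) - (p + k - k),
          by have := (Fin.castAdd k a).isLt; omega⟩) +
       (p + k - 1 - (↑(Fin.castAdd k a) : ℕ))) = m + (p - 1 - (a : ℕ)) := by
    intro a
    have ha : (↑(Fin.castAdd k a) : ℕ) = (a : ℕ) := rfl
    have ha2 := a.isLt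
    rw [dif_pos (by omega : (↑(Fin.castAdd k a) : ℕ) < p + k - k)]
    omega
  have hCexp : ∀ b : Fin k,
      ((if h : (↑(Fin.natAdd p b) : ℕ) < p + k - k then m - k
        else lam ⟨(↑(Fin.natAdd p b) : ℕ) - (p + k - k),
          by have := (Fin.natAdd p b).isLt; omega⟩) +
       (p + k - 1 - (↑(Fin.natAdd p b) : ℕ))) = lam b + (k - 1 - (b : ℕ)) := by
    intro b
    have hb : (↑(Fin.natAdd p b) : ℕ) = p + (b : ℕ) := rfl
    have hb2 := b.isLt
    rw [dif_neg (by omega)]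
    have h1 : (⟨(↑(Fin.natAdd p b) : ℕ) - (p + k - k),
        by have := (Fin.natAdd p b).isLt; omega⟩ : Fin k) = b := by
      apply Fin.ext
      show (↑(Fin.natAdd p b) : ℕ) - (p + k - k) = (b : ℕ)
      omega
    rw [h1]
    omega
  simp only [hBexp, hCexp]
  have hBdet : (Matrix.of fun a' a : Fin p =>
        x (FNRaux.ww T hT a') ^ (m + (p - 1 - (a : ℕ)))).det
      = (∏ j ∈ Tᶜ, x j ^ m) *
        ∏ a, ∏ a' ∈ Finset.Ioi a, (x (FNRaux.ww T hT a) - x (FNRaux.ww T hT a')) := by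
    have h1 : (Matrix.of fun a' a : Fin p => x (FNRaux.ww T hT a') ^ (m + (p - 1 - (a : ℕ))))
        = Matrix.of fun a' a : Fin p => (x (FNRaux.ww T hT a') ^ m) *
            (Matrix.of fun a'' a : Fin p => x (FNRaux.ww T hT a'') ^ (p - 1 - (a : ℕ))) a' a := by
      ext a' a
      simp [pow_add]
    rw [h1, Matrix.det_mul_column, FNRaux.det_rev_vandermonde,
      FNRaux.prod_ww_eq T hT (fun j => x j ^ m)]
  rw [hBdet]
  have hQeq : ∏ i ∈ T, ∏ j ∈ Tᶜ, (x j - x i)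
      = ∏ a : Fin p, ∏ b : Fin k, (x (FNRaux.ww T hT a) - x (FNRaux.uu T hT b)) := by
    rw [← FNRaux.prod_uu_eq T hT (fun i => ∏ j ∈ Tᶜ, (x j - x i))]
    rw [Finset.prod_congr rfl
      (fun b _ => (FNRaux.prod_ww_eq T hT (fun j => x j - x (FNRaux.uu T hT b))).symm)]
    exact (Finset.prod_comm)
  rw [hQeq]
  have hkey := FNRaux.key_sign x T hT
  have hDs : (∏ b : Fin k, ∏ b' ∈ Finset.Ioi b,
      (x (FNRaux.uu T hT b) - x (FNRaux.uu T hT b'))) ≠ 0 :=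
    Finset.prod_ne_zero_iff.mpr fun b _ => Finset.prod_ne_zero_iff.mpr fun b' hb' =>
      hne _ _ fun e => (Finset.mem_Ioi.mp hb').ne (FNRaux.uu_inj T hT e)
  have hQne : (∏ a : Fin p, ∏ b : Fin k,
      (x (FNRaux.ww T hT a) - x (FNRaux.uu T hT b))) ≠ 0 :=
    Finset.prod_ne_zero_iff.mpr fun a _ => Finset.prod_ne_zero_iff.mpr fun b _ =>
      hne _ _ fun e => (Finset.mem_compl.mp (FNRaux.ww_mem T hT a)) (e ▸ FNRaux.uu_mem T hT b)
  simp only [FNRaux.uu, FNRaux.ww, Finset.coe_orderIsoOfFin_apply] at hkey hDs hQne ⊢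
  field_simp [hDs, hQne]
  linear_combination ((∏ j ∈ Tᶜ, x j ^ m) *
    (Matrix.of fun b' b : Fin k =>
      x (T.orderEmbOfFin hT b') ^ (lam b + (k - 1 - (b : ℕ)))).det) * hkey
end

section
/- (Good's identity.) For every integer n ≥ 1, every field F, and all pairwise distinct nonzero x_1, …, x_n ∈ F such that 1 − x_i/x_j ≠ 0 for all i ≠ j, one has 1 = Σ_{i=1}^n ∏_{j≠i} (1 − x_i/x_j)^{−1}. -/
/-- Good's identity: for pairwise distinct nonzero `x_1,…,x_n` in a field,
`1 = Σ_{i=1}^n ∏_{j≠i} (1 − x_i/x_j)⁻¹`. -/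
theorem stmt9 {F : Type*} [Field F] (n : ℕ) (hn : 1 ≤ n)
    (x : Fin n → F) (hx0 : ∀ i, x i ≠ 0) (hx : Function.Injective x)
    (h1 : ∀ i j, i ≠ j → 1 - x i / x j ≠ 0) :
    (1 : F) = ∑ i : Fin n, ∏ j ∈ Finset.univ.erase i, (1 - x i / x j)⁻¹ := by
  have hne : (Finset.univ : Finset (Fin n)).Nonempty := ⟨⟨0, hn⟩, Finset.mem_univ _⟩
  have key := Lagrange.sum_basis (v := x) (s := Finset.univ) hx.injOn hne
  have heval := congrArg (Polynomial.eval 0) key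
  rw [Polynomial.eval_finset_sum, Polynomial.eval_one] at heval
  have sums : ∑ i : Fin n, ∏ j ∈ Finset.univ.erase i, (1 - x i / x j)⁻¹
      = ∑ i : Fin n, Polynomial.eval 0 (Lagrange.basis Finset.univ x i) := by
    apply Finset.sum_congr rfl
    intro i _
    rw [Lagrange.basis, Polynomial.eval_prod]
    apply Finset.prod_congr rfl
    intro j hj
    have hij : i ≠ j := fun h => (Finset.mem_erase.mp hj).1 h.symm
    rw [Lagrange.basisDivisor]
    simp only [Polynomial.eval_mul, Polynomial.eval_C, Polynomial.eval_sub,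
      Polynomial.eval_X, zero_sub]
    have hxj := hx0 j
    have hd : x i - x j ≠ 0 := sub_ne_zero.mpr (hx.ne hij)
    have hd' : 1 - x i / x j ≠ 0 := h1 i j hij
    have hd2 : x j - x i ≠ 0 := sub_ne_zero.mpr (hx.ne hij.symm)
    field_simp
    ring
  rw [sums, heval]
end

section
/- (Louck's identity.) Let m ≥ n − 1 ≥ 0 be integers. For every field F and all pairwise distinct x_1, …, x_n ∈ F, the complete homogeneous symmetric polynomial of degree m − n + 1 satisfies h_{m−n+1}(x_1,…,x_n) = Σ_{i=1}^n x_i^m / ∏_{j≠i}(x_i − x_j). -/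
/-- The complete homogeneous symmetric polynomial
`h_d(x_1,…,x_n) = Σ_{1 ≤ i_1 ≤ i_2 ≤ ⋯ ≤ i_d ≤ n} x_{i_1} x_{i_2} ⋯ x_{i_d}`,
realized as a sum over weakly increasing functions `Fin d → Fin n`. -/
def hpoly {R : Type*} [CommRing R] (n d : ℕ) (x : Fin n → R) : R :=
  ∑ f : {f : Fin d → Fin n // ∀ i j, i ≤ j → f i ≤ f j}, ∏ t : Fin d, x (f.1 t)

section LouckAux
open Finset

private def hh {R : Type*} [CommRing R] : ℕ → List R → R
  | 0, _ => 1
  | _+1, [] => 0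
  | d+1, a :: L => a * hh d (a :: L) + hh (d+1) L

private def W {F : Type*} [Field F] (c : F) (L : List F) : F :=
  (L.map (fun e => c - e)).prod

private def S' {F : Type*} [Field F] (m : ℕ) (P : F → F) : List F → F
  | [] => 0
  | a :: L => a ^ m / (P a * W a L) + S' m (fun c => P c * (c - a)) L

variable {F : Type*} [Field F] {R : Type*} [CommRing R]

private lemma hh_single (a : R) : ∀ d, hh d [a] = a ^ d
  | 0 => by simp [hh]
  | d+1 => by simp only [hh, hh_single a d]; rw [pow_succ]; ring

private lemma hh_two (a b : R) (L : List R) :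
    ∀ d, (a - b) * hh d (a :: b :: L) = hh (d+1) (a :: L) - hh (d+1) (b :: L)
  | 0 => by simp [hh]
  | d+1 => by
    have IH := hh_two a b L d
    have e1 : hh (d+1+1) (a :: L) = a * hh (d+1) (a :: L) + hh (d+1+1) L := by
      conv_lhs => rw [hh]
    have e2 : hh (d+1+1) (b :: L) = b * hh (d+1) (b :: L) + hh (d+1+1) L := by
      conv_lhs => rw [hh]
    have e3 : hh (d+1) (a :: b :: L) = a * hh d (a :: b :: L) + hh (d+1) (b :: L) := by
      conv_lhs => rw [hh]
    rw [e1, e2, e3]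
    linear_combination a * IH

private lemma frac' (t Pc Wc a b c : F) (hca : c ≠ a) (hcb : c ≠ b) :
    (a - b) * (t / ((Pc * ((c-a)*(c-b))) * Wc)) = t/((Pc*(c-a))*Wc) - t/((Pc*(c-b))*Wc) := by
  rcases eq_or_ne Pc 0 with h | h
  · simp [h]
  rcases eq_or_ne Wc 0 with h2 | h2
  · simp [h2]
  have ha : c - a ≠ 0 := sub_ne_zero.mpr hca
  have hb : c - b ≠ 0 := sub_ne_zero.mpr hcb
  field_simp
  ring

private lemma S'_sub (m : ℕ) (a b : F) (hab : a ≠ b) :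
    ∀ (L : List F) (P : F → F), (∀ c ∈ L, c ≠ a) → (∀ c ∈ L, c ≠ b) →
    (a - b) * S' m (fun c => P c * ((c-a)*(c-b))) L
      = S' m (fun c => P c * (c-a)) L - S' m (fun c => P c * (c-b)) L := by
  intro L
  induction L with
  | nil => intro P _ _; simp [S']
  | cons c L ih =>
    intro P ha hb
    have hca : c ≠ a := ha c List.mem_cons_self
    have hcb : c ≠ b := hb c List.mem_cons_self
    simp only [S']
    rw [mul_add, frac' (c ^ m) (P c) (W c L) a b c hca hcb]
    have h1 : (fun e => (P e * ((e-a)*(e-b))) * (e - c)) = (fun e => (P e * (e - c)) * ((e-a)*(e-b))) := by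
      funext e; ring
    have h2 : (fun e => (P e * (e - c)) * (e-a)) = (fun e => (P e * (e-a)) * (e - c)) := by
      funext e; ring
    have h3 : (fun e => (P e * (e - c)) * (e-b)) = (fun e => (P e * (e-b)) * (e - c)) := by
      funext e; ring
    rw [h1, ih (fun e => P e * (e - c)) (fun e he => ha e (List.mem_cons_of_mem _ he))
      (fun e he => hb e (List.mem_cons_of_mem _ he)), h2, h3]
    ring

private lemma W_cons (c e : F) (L : List F) : W c (e :: L) = (c - e) * W c L := by
  simp [W]

private lemma headfrac (t D u : F) (hu : u ≠ 0) : u * (t / (1 * (u * D))) = t / (1 * D) := by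
  rcases eq_or_ne D 0 with h | h
  · simp [h]
  · field_simp

private lemma S_two (m : ℕ) (a b : F) (L : List F) (hab : a ≠ b)
    (ha : ∀ c ∈ L, c ≠ a) (hb : ∀ c ∈ L, c ≠ b) :
    (a - b) * S' m (fun _ => 1) (a :: b :: L)
      = S' m (fun _ => 1) (a :: L) - S' m (fun _ => 1) (b :: L) := by
  have hab' : a - b ≠ 0 := sub_ne_zero.mpr hab
  have hba' : b - a ≠ 0 := sub_ne_zero.mpr (Ne.symm hab)
  simp only [S', W_cons]
  rw [mul_add, mul_add, headfrac (a ^ m) (W a L) (a - b) hab']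
  have hb2 : (a - b) * (b ^ m / (1 * (b - a) * W b L)) = -(b ^ m / (1 * W b L)) := by
    rcases eq_or_ne (W b L) 0 with h | h
    · simp [h]
    · field_simp; ring
  rw [hb2]
  have h1 : (fun c : F => (1 : F) * (c - a) * (c - b)) = (fun c => (1 : F) * ((c-a)*(c-b))) := by
    funext e; ring
  have h2 : (fun c : F => (1 : F) * (c-a)) = (fun c : F => (1 : F) * (c - a)) := rfl
  rw [h1, S'_sub m a b hab L (fun _ => 1) ha hb]
  ring

private lemma key (m : ℕ) : ∀ (k : ℕ) (L : List F), L.length ≤ k → L.Pairwise (· ≠ ·) →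
    1 ≤ L.length → L.length - 1 ≤ m →
    hh (m + 1 - L.length) L = S' m (fun _ => 1) L := by
  intro k
  induction k with
  | zero => intro L h _ h1 _; omega
  | succ k ih =>
    intro L hlen hpw h1 hm
    rcases L with _ | ⟨a, _ | ⟨b, L⟩⟩
    · simp at h1
    · simp only [List.length_singleton]
      rw [show m + 1 - 1 = m from by omega, hh_single]
      simp [S', W]
    · simp only [List.length_cons] at hlen h1 hm ⊢
      rw [List.pairwise_cons] at hpw
      obtain ⟨haL', hpw⟩ := hpw
      rw [List.pairwise_cons] at hpw
      obtain ⟨hbL', hLpw⟩ := hpw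
      have hab : a ≠ b := haL' b List.mem_cons_self
      have haL : ∀ c ∈ L, c ≠ a := fun c hc => (haL' c (List.mem_cons_of_mem _ hc)).symm
      have hbL : ∀ c ∈ L, c ≠ b := fun c hc => (hbL' c hc).symm
      have hab' : a - b ≠ 0 := sub_ne_zero.mpr hab
      set l := L.length with hl
      have pwA : (a :: L).Pairwise (· ≠ ·) :=
        List.pairwise_cons.mpr ⟨fun c hc => (haL c hc).symm, hLpw⟩
      have pwB : (b :: L).Pairwise (· ≠ ·) :=
        List.pairwise_cons.mpr ⟨fun c hc => (hbL c hc).symm, hLpw⟩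
      have IHa := ih (a :: L) (by simp; omega) pwA (by simp) (by simp; omega)
      have IHb := ih (b :: L) (by simp; omega) pwB (by simp) (by simp; omega)
      simp only [List.length_cons] at IHa IHb
      rw [show m + 1 - (l + 1) = m - l from by omega] at IHa IHb
      have htwo := hh_two a b L (m - l - 1)
      rw [show m - l - 1 + 1 = m - l from by omega] at htwo
      rw [show m + 1 - (l + 1 + 1) = m - l - 1 from by omega]
      apply mul_left_cancel₀ hab'
      rw [htwo, IHa, IHb, S_two m a b L hab haL hbL]

private lemma prod_erase_zero {n : ℕ} (g : Fin (n+1) → F) :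
    ∏ j ∈ Finset.univ.erase 0, g j = ∏ j : Fin n, g j.succ := by
  rw [Fin.univ_succ, Finset.erase_cons, Finset.prod_map]
  rfl

private lemma prod_erase_succ {n : ℕ} (i : Fin n) (g : Fin (n+1) → F) :
    ∏ j ∈ Finset.univ.erase i.succ, g j = g 0 * ∏ j ∈ Finset.univ.erase i, g j.succ := by
  rw [Fin.univ_succ]
  rw [Finset.erase_cons_of_ne _ (Fin.succ_ne_zero i).symm]
  rw [Finset.prod_cons]
  congr 1
  rw [show (Fin.succ i : Fin (n+1)) = (⟨Fin.succ, Fin.succ_injective n⟩ : Fin n ↪ Fin (n+1)) i from rfl,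
    ← Finset.map_erase, Finset.prod_map]
  rfl

private lemma W_ofFn {n : ℕ} (c : F) (y : Fin n → F) :
    W c (List.ofFn y) = ∏ j : Fin n, (c - y j) := by
  rw [W, List.map_ofFn, List.prod_ofFn]
  rfl

private lemma S'_ofFn (m : ℕ) : ∀ (n : ℕ) (x : Fin n → F) (P : F → F),
    S' m P (List.ofFn x)
      = ∑ i : Fin n, x i ^ m / (P (x i) * ∏ j ∈ Finset.univ.erase i, (x i - x j)) := by
  intro n
  induction n with
  | zero => intro x P; simp [S']
  | succ n ih =>
    intro x P
    rw [List.ofFn_succ]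
    simp only [S']
    rw [ih (fun i => x i.succ) (fun c => P c * (c - x 0))]
    rw [Fin.sum_univ_succ]
    congr 1
    · rw [W_ofFn, prod_erase_zero]
    · apply Finset.sum_congr rfl
      intro i _
      rw [prod_erase_succ i (fun j => x i.succ - x j)]
      ring_nf

private lemma hpoly_d_zero (n : ℕ) (x : Fin n → R) : hpoly n 0 x = 1 := by
  haveI : Unique {f : Fin 0 → Fin n // ∀ i j, i ≤ j → f i ≤ f j} :=
    ⟨⟨⟨Fin.elim0, fun i => i.elim0⟩⟩, fun a => Subtype.ext (funext fun i => i.elim0)⟩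
  rw [hpoly, Fintype.sum_unique]
  simp

private lemma hpoly_n_zero (d : ℕ) (x : Fin 0 → R) : hpoly 0 (d+1) x = 0 := by
  haveI : IsEmpty {f : Fin (d+1) → Fin 0 // ∀ i j, i ≤ j → f i ≤ f j} :=
    ⟨fun g => (g.1 0).elim0⟩
  rw [hpoly, Finset.univ_eq_empty, Finset.sum_empty]

private lemma hpoly_succ (n d : ℕ) (x : Fin (n+1) → R) :
    hpoly (n+1) (d+1) x = x 0 * hpoly (n+1) d x + hpoly n (d+1) (fun i => x i.succ) := by
  have hcons : ∀ (g : Fin d → Fin (n+1)), (∀ i j : Fin d, i ≤ j → g i ≤ g j) →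
      ∀ i j : Fin (d+1), i ≤ j → (Fin.cons 0 g : Fin (d+1) → Fin (n+1)) i ≤ (Fin.cons 0 g : Fin (d+1) → Fin (n+1)) j := by
    intro g hg i j hij
    rcases Fin.eq_zero_or_eq_succ i with rfl | ⟨i', rfl⟩
    · rw [Fin.cons_zero]; exact Fin.zero_le _
    rcases Fin.eq_zero_or_eq_succ j with rfl | ⟨j', rfl⟩
    · exact absurd hij (by simp [Fin.le_def])
    · rw [Fin.cons_succ, Fin.cons_succ]
      exact hg i' j' (by rwa [Fin.succ_le_succ_iff] at hij)
  let e : {f : Fin d → Fin (n+1) // ∀ i j, i ≤ j → f i ≤ f j} ⊕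
      {f : Fin (d+1) → Fin n // ∀ i j, i ≤ j → f i ≤ f j} →
      {f : Fin (d+1) → Fin (n+1) // ∀ i j, i ≤ j → f i ≤ f j} := fun s =>
    match s with
    | Sum.inl g => ⟨Fin.cons 0 g.1, hcons g.1 g.2⟩
    | Sum.inr g => ⟨fun i => (g.1 i).succ, fun i j hij => Fin.succ_le_succ_iff.mpr (g.2 i j hij)⟩
  have he : Function.Bijective e := by
    constructor
    · rintro (g | g) (g' | g') h
      · simp only [e, Subtype.mk.injEq] at h
        congr 1
        exact Subtype.ext (funext fun i => by
          have := congrFun h i.succ; rwa [Fin.cons_succ, Fin.cons_succ] at this)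
      · exfalso
        simp only [e, Subtype.mk.injEq] at h
        have := congrFun h 0
        rw [Fin.cons_zero] at this
        exact (Fin.succ_ne_zero _) this.symm
      · exfalso
        simp only [e, Subtype.mk.injEq] at h
        have := congrFun h 0
        rw [Fin.cons_zero] at this
        exact (Fin.succ_ne_zero _) this
      · simp only [e, Subtype.mk.injEq] at h
        congr 1
        exact Subtype.ext (funext fun i => Fin.succ_injective _ (congrFun h i))
    · rintro ⟨f, hf⟩
      by_cases h0 : f 0 = 0
      · refine ⟨Sum.inl ⟨fun i => f i.succ, fun i j hij => hf _ _ (Fin.succ_le_succ_iff.mpr hij)⟩, ?_⟩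
        apply Subtype.ext
        funext i
        rcases Fin.eq_zero_or_eq_succ i with rfl | ⟨i', rfl⟩
        · simpa [e] using h0.symm
        · simp [e]
      · have hne : ∀ i, f i ≠ 0 := by
          intro i hi
          exact h0 (le_antisymm (hi ▸ hf 0 i (Fin.zero_le i)) (Fin.zero_le _))
        refine ⟨Sum.inr ⟨fun i => (f i).pred (hne i), fun i j hij => ?_⟩, ?_⟩
        · rw [Fin.pred_le_pred_iff]; exact hf i j hij
        · apply Subtype.ext; funext i; simp [e, Fin.succ_pred]
  rw [hpoly,
    ← Fintype.sum_bijective e he (fun s => ∏ t, x ((e s).1 t)) (fun a => ∏ t, x (a.1 t))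
      (fun s => rfl),
    Fintype.sum_sum_type]
  congr 1
  · rw [hpoly, Finset.mul_sum]
    apply Finset.sum_congr rfl
    intro g _
    rw [Fin.prod_univ_succ]
    simp [e]

private lemma hh_ofFn : ∀ (n : ℕ) (x : Fin n → R) (d : ℕ), hpoly n d x = hh d (List.ofFn x) := by
  intro n
  induction n with
  | zero =>
    intro x d
    rcases d with _ | d
    · rw [hpoly_d_zero]; simp [hh]
    · rw [hpoly_n_zero]; simp [hh]
  | succ n ihn =>
    intro x d
    induction d with
    | zero => rw [hpoly_d_zero]; simp [hh]
    | succ d ihd =>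
      rw [hpoly_succ, ihd, ihn (fun i => x i.succ) (d+1), List.ofFn_succ]
      conv_rhs => rw [hh]

end LouckAux

/-- Louck's identity: for `m ≥ n − 1 ≥ 0` and pairwise distinct `x_1,…,x_n`,
`h_{m−n+1}(x_1,…,x_n) = Σ_{i=1}^n x_i^m / ∏_{j≠i}(x_i − x_j)`. -/
theorem stmt10 {F : Type*} [Field F] (n m : ℕ) (hn : 1 ≤ n) (hm : n - 1 ≤ m)
    (x : Fin n → F) (hx : Function.Injective x) :
    hpoly n (m + 1 - n) x
      = ∑ i : Fin n, x i ^ m / ∏ j ∈ Finset.univ.erase i, (x i - x j) := by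
  have hnd : (List.ofFn x).Pairwise (· ≠ ·) := List.nodup_ofFn.mpr hx
  have hk := key m n (List.ofFn x) (by rw [List.length_ofFn]) hnd
    (by rw [List.length_ofFn]; exact hn) (by rw [List.length_ofFn]; exact hm)
  rw [List.length_ofFn] at hk
  rw [hh_ofFn, hk, S'_ofFn]
  simp
end

section
/- For every integer n ≥ 1, let H(n) be the n×n matrix whose entry in row r and column c (1 ≤ r, c ≤ n) is Σ_{i=0}^{n−r} binom(c−1, i) · E^β_{i−c+r}(Y_{n−c}) · β^i. Then det(H(n)) = 1. -/
/-- `E^β_k(Y_n) = Σ_{S ⊆ [n], |S| = k} (∏_{i∈S} y_i)(∏_{j∈[n]∖S} (1 + βy_j))` for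
`0 ≤ k ≤ n`, and `0` for `k < 0` or `k > n` (`y t` is `y_{t+1}`, 0-based). -/
def Ebeta {R : Type*} [CommRing R] (β : R) (y : ℕ → R) (k : ℤ) (n : ℕ) : R :=
  if 0 ≤ k then
    ∑ S ∈ Finset.powersetCard k.toNat (Finset.range n),
      (∏ i ∈ S, y i) * ∏ j ∈ Finset.range n \ S, (1 + β * y j)
  else 0

section Aux
variable {R : Type*} [CommRing R] (β : R) (y : ℕ → R)

lemma Ebeta_neg {k : ℤ} (hk : k < 0) (n : ℕ) : Ebeta β y k n = 0 :=
  if_neg (not_le.2 hk)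

lemma Ebeta_gt {k : ℤ} {n : ℕ} (h : (n : ℤ) < k) : Ebeta β y k n = 0 := by
  rw [Ebeta, if_pos (le_of_lt ((Int.natCast_nonneg n).trans_lt h))]
  have : Finset.powersetCard k.toNat (Finset.range n) = ∅ := by
    rw [Finset.powersetCard_eq_empty, Finset.card_range]
    exact Int.lt_toNat.2 h
  simp [this]

lemma Ebeta_zero_zero : Ebeta β y 0 0 = 1 := by
  simp [Ebeta]

lemma Ebeta_succ (k : ℤ) (m : ℕ) :
    Ebeta β y k (m + 1) =
      (1 + β * y m) * Ebeta β y k m + y m * Ebeta β y (k - 1) m := by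
  rcases lt_or_ge k 0 with hk | hk
  · rw [Ebeta_neg β y hk, Ebeta_neg β y hk, Ebeta_neg β y (by omega)]
    ring
  rcases eq_or_lt_of_le hk with h0 | h0
  · rw [← h0]
    rw [Ebeta_neg β y (by omega : (0:ℤ) - 1 < 0)]
    simp [Ebeta, Finset.prod_range_succ]
    ring
  · obtain ⟨t, rfl⟩ : ∃ t : ℕ, k = (t : ℤ) + 1 := ⟨(k - 1).toNat, by omega⟩
    rw [Ebeta, Ebeta, Ebeta, if_pos hk, if_pos (by omega : (0:ℤ) ≤ (t:ℤ)+1-1),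
      if_pos hk]
    have ht1 : ((t : ℤ) + 1).toNat = t + 1 := by omega
    have ht2 : ((t : ℤ) + 1 - 1).toNat = t := by omega
    rw [ht1, ht2]
    rw [Finset.range_add_one, Finset.powersetCard_succ_insert (Finset.notMem_range_self)]
    rw [Finset.sum_union, Finset.sum_image]
    · congr 1
      · rw [Finset.mul_sum]
        refine Finset.sum_congr rfl fun S hS => ?_
        have hSsub : S ⊆ Finset.range m := (Finset.mem_powersetCard.1 hS).1
        have hms : m ∉ S := fun h => by simpa using hSsub h
        have : insert m (Finset.range m) \ S = insert m (Finset.range m \ S) :=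
          Finset.insert_sdiff_of_notMem _ hms
        rw [this, Finset.prod_insert (by simp)]
        ring
      · rw [Finset.mul_sum]
        refine Finset.sum_congr rfl fun S hS => ?_
        have hSsub : S ⊆ Finset.range m := (Finset.mem_powersetCard.1 hS).1
        have hms : m ∉ S := fun h => by simpa using hSsub h
        have h1 : insert m (Finset.range m) \ insert m S = Finset.range m \ S := by
          ext a
          simp only [Finset.mem_sdiff, Finset.mem_insert, Finset.mem_range]
          constructor
          · rintro ⟨h2 | h2, h3⟩
            · exact absurd (Or.inl h2) h3
            · exact ⟨h2, fun h4 => h3 (Or.inr h4)⟩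
          · rintro ⟨h2, h3⟩
            exact ⟨Or.inr h2, by rintro (rfl | h4); exacts [absurd h2 (lt_irrefl _), h3 h4]⟩
        rw [h1, Finset.prod_insert hms]
        ring
    · intro S hS T hT hST
      have hmS : m ∉ S := fun h => by
        simpa using (Finset.mem_powersetCard.1 hS).1 h
      have hmT : m ∉ T := fun h => by
        simpa using (Finset.mem_powersetCard.1 hT).1 h
      have := congrArg (Finset.erase · m) hST
      simp only [Finset.erase_insert hmS, Finset.erase_insert hmT] at this; exact this
    · rw [Finset.disjoint_left]
      intro S hS hS'
      obtain ⟨T, hT, rfl⟩ := Finset.mem_image.1 hS'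
      have : m ∈ Finset.range m := (Finset.mem_powersetCard.1 hS).1 (Finset.mem_insert_self _ _)
      simpa using this

lemma key_s12 (n r c : ℕ) (hr : r ≤ n) (hc : c < n) :
    (∑ i ∈ Finset.range (n + 1 - r),
        (Nat.choose c i : R) * Ebeta β y ((i:ℤ) - (c:ℤ) + (r:ℤ)) (n - c) * β ^ i)
      - y (n - 1 - c) *
      (∑ i ∈ Finset.range (n + 1 - r),
        (Nat.choose (c+1) i : R) * Ebeta β y ((i:ℤ) - ((c:ℕ)+1 : ℕ) + (r:ℤ)) (n - 1 - c) * β ^ i)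
    = ∑ i ∈ Finset.range (n + 1 - r),
        (Nat.choose c i : R) * Ebeta β y ((i:ℤ) - (c:ℤ) + (r:ℤ)) (n - 1 - c) * β ^ i := by
  set m : ℕ := n - 1 - c with hm
  have hmc : n - c = m + 1 := by omega
  set A : R := ∑ i ∈ Finset.range (n + 1 - r),
      (Nat.choose c i : R) * Ebeta β y ((i:ℤ) - (c:ℤ) + (r:ℤ)) m * β ^ i with hA
  set B : R := ∑ i ∈ Finset.range (n + 1 - r),
      (Nat.choose c i : R) * Ebeta β y ((i:ℤ) - (c:ℤ) + (r:ℤ) - 1) m * β ^ i with hB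
  have e1 : (∑ i ∈ Finset.range (n + 1 - r),
      (Nat.choose c i : R) * Ebeta β y ((i:ℤ) - (c:ℤ) + (r:ℤ)) (n - c) * β ^ i)
      = (1 + β * y m) * A + y m * B := by
    rw [hA, hB, Finset.mul_sum, Finset.mul_sum, ← Finset.sum_add_distrib]
    refine Finset.sum_congr rfl fun i _ => ?_
    rw [hmc, Ebeta_succ]
    ring
  have hAtop : A = ∑ i ∈ Finset.range (n - r),
      (Nat.choose c i : R) * Ebeta β y ((i:ℤ) - (c:ℤ) + (r:ℤ)) m * β ^ i := by
    rw [hA]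
    have h1 : n + 1 - r = (n - r) + 1 := by omega
    rw [h1, Finset.sum_range_succ]
    have h0 : Ebeta β y (((n - r : ℕ) : ℤ) - (c:ℤ) + (r:ℤ)) m = 0 :=
      Ebeta_gt β y (by omega)
    rw [h0]
    ring
  have e2 : (∑ i ∈ Finset.range (n + 1 - r),
      (Nat.choose (c+1) i : R) * Ebeta β y ((i:ℤ) - ((c:ℕ)+1 : ℕ) + (r:ℤ)) m * β ^ i)
      = B + β * A := by
    have h1 : n + 1 - r = (n - r) + 1 := by omega
    rw [h1, Finset.sum_range_succ', hA, hB, h1, Finset.sum_range_succ']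
    rw [← h1, ← hA, hAtop, add_right_comm, Finset.mul_sum, ← Finset.sum_add_distrib]
    congr 1
    · refine Finset.sum_congr rfl fun i _ => ?_
      have hch : ((c+1).choose (i+1) : R) = (c.choose i : R) + (c.choose (i+1) : R) := by
        rw [Nat.choose_succ_succ]; push_cast; ring
      have hk1 : ((i:ℤ)+1) - ((c:ℕ)+1 : ℕ) + (r:ℤ) = (i:ℤ) - (c:ℤ) + (r:ℤ) := by
        push_cast; ring
      have hk2 : ((i:ℤ)+1) - (c:ℤ) + (r:ℤ) - 1 = (i:ℤ) - (c:ℤ) + (r:ℤ) := by ring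
      push_cast
      rw [hch]
      rw [show ((i:ℤ)+1) - ((c:ℤ)+1) + (r:ℤ) = (i:ℤ) - (c:ℤ) + (r:ℤ) by ring]
      rw [show ((i:ℤ)+1) - (c:ℤ) + (r:ℤ) - 1 = (i:ℤ) - (c:ℤ) + (r:ℤ) by ring]
      ring
    · rw [show ((0:ℕ):ℤ) - ((c:ℕ)+1 : ℕ) + (r:ℤ) = ((0:ℕ):ℤ) - (c:ℤ) + (r:ℤ) - 1 by push_cast; ring]
      simp
  rw [e1]
  rw [show (∑ i ∈ Finset.range (n + 1 - r),
      (Nat.choose (c+1) i : R) * Ebeta β y ((i:ℤ) - ((c:ℕ)+1 : ℕ) + (r:ℤ)) (n-1-c) * β ^ i)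
      = B + β * A from e2]
  have hym : y (n - 1 - c) = y m := by rw [hm]
  rw [hym]
  ring

def Hmat (β : R) (y : ℕ → R) (n : ℕ) : Matrix (Fin n) (Fin n) R :=
  Matrix.of fun r c : Fin n =>
    ∑ i ∈ Finset.range (n - (r : ℕ)),
      (Nat.choose (c : ℕ) i : R)
        * Ebeta β y ((i : ℤ) - ((c : ℕ) : ℤ) + ((r : ℕ) : ℤ)) (n - 1 - (c : ℕ))
        * β ^ i

lemma det_Hmat (n : ℕ) : (Hmat β y n).det = 1 := by
  induction n with
  | zero => simp [Matrix.det_isEmpty]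
  | succ n ih =>
    set H : Matrix (Fin (n+1)) (Fin (n+1)) R := Hmat β y (n+1) with hH
    set U : Matrix (Fin (n+1)) (Fin (n+1)) R := Matrix.of fun i j =>
      if i = j then 1 else if (i : ℕ) = (j : ℕ) + 1 then -(y (n - 1 - (j : ℕ))) else 0 with hU
    have hUdet : U.det = 1 := by
      rw [Matrix.det_of_lowerTriangular U (by
        intro i j hij
        have hij' : (i : ℕ) < (j : ℕ) := hij
        simp only [hU, Matrix.of_apply]
        rw [if_neg (by omega : ¬ i = j), if_neg (by omega : ¬ (i : ℕ) = (j : ℕ) + 1)])]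
      simp [hU]
    set G : Matrix (Fin (n+1)) (Fin (n+1)) R := H * U with hG
    have hGdet : G.det = H.det := by rw [hG, Matrix.det_mul, hUdet, mul_one]
    -- entry formula for G
    have hGent1 : ∀ (r c : Fin (n+1)) (hc : (c : ℕ) < n),
        G r c = H r c - y (n - 1 - (c : ℕ)) * H r ⟨(c : ℕ) + 1, by omega⟩ := by
      intro r c hc
      have : G r c = ∑ j : Fin (n+1), H r j * U j c := rfl
      rw [this]
      have hsplit : ∀ j : Fin (n+1), H r j * U j c =
          (if j = c then H r c else 0) +
          (if j = (⟨(c : ℕ) + 1, by omega⟩ : Fin (n+1)) then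
            -(y (n - 1 - (c : ℕ))) * H r ⟨(c : ℕ) + 1, by omega⟩ else 0) := by
        intro j
        simp only [hU, Matrix.of_apply]
        by_cases h1 : j = c
        · subst h1
          rw [if_pos rfl, if_pos rfl, if_neg (by
            intro h; apply_fun (Fin.val) at h; simp at h)]
          ring
        · rw [if_neg h1, if_neg h1]
          by_cases h2 : j = (⟨(c : ℕ) + 1, by omega⟩ : Fin (n+1))
          · subst h2
            rw [if_pos rfl, if_pos rfl]
            ring
          · rw [if_neg h2, if_neg (by
              intro h; apply h2; apply Fin.ext; simpa using h)]
            ring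
      rw [Finset.sum_congr rfl fun j _ => hsplit j, Finset.sum_add_distrib,
        Finset.sum_ite_eq' _ c, Finset.sum_ite_eq' _ (⟨(c : ℕ) + 1, by omega⟩ : Fin (n+1))]
      simp only [Finset.mem_univ, if_pos]
      ring
    have hGent2 : ∀ r : Fin (n+1), G r (Fin.last n) = H r (Fin.last n) := by
      intro r
      have : G r (Fin.last n) = ∑ j : Fin (n+1), H r j * U j (Fin.last n) := rfl
      rw [this]
      rw [Finset.sum_eq_single (Fin.last n)]
      · simp [hU]
      · intro j _ hj
        simp only [hU, Matrix.of_apply]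
        rw [if_neg hj, if_neg (by
          have := j.isLt
          simp only [Fin.val_last]
          omega)]
        ring
      · simp
    have hHent : ∀ (r c : Fin (n+1)), H r c = ∑ i ∈ Finset.range (n + 1 - (r : ℕ)),
        (Nat.choose (c : ℕ) i : R)
          * Ebeta β y ((i : ℤ) - ((c : ℕ) : ℤ) + ((r : ℕ) : ℤ)) (n - (c : ℕ)) * β ^ i := by
      intro r c
      simp only [hH, Hmat, Matrix.of_apply, Nat.add_sub_cancel]
    have hrow : ∀ c : Fin (n+1), (c : ℕ) < n → G (Fin.last n) c = 0 := by
      intro c hc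
      rw [hGent1 _ _ hc, hHent, hHent]
      simp only [Fin.val_last]
      rw [show n - ((c : ℕ) + 1) = n - 1 - (c : ℕ) by omega]
      rw [key_s12 β y n n (c : ℕ) le_rfl hc]
      rw [show n + 1 - n = 1 by omega, Finset.sum_range_one]
      rw [Ebeta_gt β y (by omega : ((n - 1 - (c : ℕ) : ℕ) : ℤ) < ((0:ℕ):ℤ) - ((c:ℕ):ℤ) + (n:ℤ))]
      ring
    have hcorner : G (Fin.last n) (Fin.last n) = 1 := by
      rw [hGent2, hHent]
      simp only [Fin.val_last]
      rw [show n + 1 - n = 1 by omega, Finset.sum_range_one]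
      rw [show ((0:ℕ):ℤ) - ((n:ℕ):ℤ) + ((n:ℕ):ℤ) = 0 by push_cast; ring]
      rw [show n - n = 0 by omega, Ebeta_zero_zero]
      simp
    have hsub : G.submatrix Fin.castSucc Fin.castSucc = Hmat β y n := by
      ext r c
      have hc : ((Fin.castSucc c : Fin (n+1)) : ℕ) < n := by
        simpa using c.isLt
      rw [Matrix.submatrix_apply, hGent1 _ _ hc, hHent, hHent]
      simp only [Fin.coe_castSucc]
      rw [show n - ((c : ℕ) + 1) = n - 1 - (c : ℕ) by omega]
      rw [key_s12 β y n (r : ℕ) (c : ℕ) (by omega) c.isLt]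
      rw [show n + 1 - (r : ℕ) = (n - (r : ℕ)) + 1 by omega, Finset.sum_range_succ]
      rw [Ebeta_gt β y (by omega :
        ((n - 1 - (c : ℕ) : ℕ) : ℤ) < ((n - (r : ℕ) : ℕ) : ℤ) - ((c:ℕ):ℤ) + ((r:ℕ):ℤ))]
      simp [Hmat]
    have hGdet2 : G.det = 1 := by
      rw [Matrix.det_succ_row G (Fin.last n)]
      rw [Finset.sum_eq_single (Fin.last n)]
      · rw [hcorner, Fin.succAbove_last, hsub, ih]
        simp only [Fin.val_last, mul_one]
        rw [← two_mul, pow_mul]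
        norm_num
      · intro j _ hj
        rw [hrow j (Fin.val_lt_last hj)]
        ring
      · simp
    calc (Hmat β y (n+1)).det = G.det := hGdet.symm
    _ = 1 := hGdet2

end Aux

/-- `det(H(n)) = 1`, where `H(n)` has entries
`H(n)_{r,c} = Σ_{i=0}^{n−r} binom(c−1,i) E^β_{i−c+r}(Y_{n−c}) β^i` for `1 ≤ r, c ≤ n`
(here `r, c : Fin n` are 0-based, corresponding to `r+1`, `c+1` above). -/
theorem stmt12 {R : Type*} [CommRing R] (β : R) (y : ℕ → R) (n : ℕ) (hn : 1 ≤ n) :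
    (Matrix.of fun r c : Fin n =>
        ∑ i ∈ Finset.range (n - (r : ℕ)),
          (Nat.choose (c : ℕ) i : R)
            * Ebeta β y ((i : ℤ) - ((c : ℕ) : ℤ) + ((r : ℕ) : ℤ)) (n - 1 - (c : ℕ))
            * β ^ i).det = 1 := by
  exact det_Hmat β y n
end

section
/- For all integers n ≥ 1 and 1 ≤ c ≤ n, and all β, x, y_1, y_2, … in a commutative ring, [x|y]^{n−c}·(1+βx)^{c−1} = Σ_{j=1}^{n} x^{n−j} · (Σ_{i=0}^{n−j} binom(c−1, i) · E^β_{i−c+j}(Y_{n−c}) · β^i). -/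
lemma fpow_expand {R : Type*} [CommRing R] (β x : R) (y : ℕ → R) (m : ℕ) :
    fpow β y x m = ∑ k ∈ Finset.range (m + 1), Ebeta β y ((m : ℤ) - k) m * x ^ k := by
  have h1 : fpow β y x m
      = ∑ k ∈ Finset.range (m + 1), Ebeta β y (k : ℤ) m * x ^ (m - k) := by
    unfold fpow
    have : ∀ t ∈ Finset.range m, x + y t + β * x * y t = y t + x * (1 + β * y t) := by
      intro t _; ring
    rw [Finset.prod_congr rfl this, Finset.prod_add, Finset.sum_powerset,
      Finset.card_range]
    refine Finset.sum_congr rfl fun k hk => ?_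
    rw [Finset.mem_range] at hk
    rw [Ebeta, if_pos (Int.ofNat_nonneg k), Int.toNat_natCast, Finset.sum_mul]
    refine Finset.sum_congr rfl fun S hS => ?_
    rw [Finset.mem_powersetCard] at hS
    have hcard : (Finset.range m \ S).card = m - k := by
      rw [Finset.card_sdiff_of_subset hS.1, Finset.card_range, hS.2]
    rw [Finset.prod_mul_distrib, Finset.prod_const, hcard]; ring
  rw [h1, ← Finset.sum_range_reflect]
  refine Finset.sum_congr rfl fun k hk => ?_
  rw [Finset.mem_range] at hk
  have hk' : k ≤ m := by omega
  have h2 : ((m - k : ℕ) : ℤ) = (m : ℤ) - k := by omega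
  have h3 : m - (m - k) = k := by omega
  have h0 : m + 1 - 1 - k = m - k := by omega
  rw [h0, h2, h3]

/-- For `1 ≤ c ≤ n`,
`[x|y]^{n−c}(1+βx)^{c−1} = Σ_{j=1}^n x^{n−j} (Σ_{i=0}^{n−j} binom(c−1,i) E^β_{i−c+j}(Y_{n−c}) β^i)`. -/
theorem stmt13 {R : Type*} [CommRing R] (β x : R) (y : ℕ → R) (n c : ℕ)
    (hc1 : 1 ≤ c) (hcn : c ≤ n) :
    fpow β y x (n - c) * (1 + β * x) ^ (c - 1)
      = ∑ j ∈ Finset.Icc 1 n, x ^ (n - j)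
          * ∑ i ∈ Finset.range (n - j + 1),
              (Nat.choose (c - 1) i : R) * Ebeta β y ((i : ℤ) - (c : ℤ) + (j : ℤ)) (n - c)
                * β ^ i := by
  set m := n - c with hm
  set d := c - 1 with hd
  have hn : n = m + d + 1 := by omega
  -- Step A: fpow extended over range n
  have hA : fpow β y x m = ∑ k ∈ Finset.range n, Ebeta β y ((m : ℤ) - k) m * x ^ k := by
    rw [fpow_expand]
    refine Finset.sum_subset (by intro k hk; simp only [Finset.mem_range] at *; omega)
      fun k _ hk => ?_
    rw [Finset.mem_range, not_lt] at hk
    rw [Ebeta, if_neg (by omega), zero_mul]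
  -- Step B: binomial extended over range n
  have hB : (1 + β * x) ^ d
      = ∑ i ∈ Finset.range n, (Nat.choose d i : R) * β ^ i * x ^ i := by
    have h := add_pow (β * x) 1 d
    rw [add_comm (β * x) 1] at h
    rw [h]
    have heq : ∀ i ∈ Finset.range (d + 1),
        (β * x) ^ i * 1 ^ (d - i) * (Nat.choose d i : R)
          = (Nat.choose d i : R) * β ^ i * x ^ i := by
      intro i _; rw [mul_pow]; ring
    rw [Finset.sum_congr rfl heq]
    refine Finset.sum_subset (by intro i hi; simp only [Finset.mem_range] at *; omega)
      fun i _ hi => ?_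
    rw [Finset.mem_range, not_lt] at hi
    rw [Nat.choose_eq_zero_of_lt (by omega), Nat.cast_zero, zero_mul, zero_mul]
  rw [hA, hB, Finset.sum_mul_sum, ← Finset.sum_product']
  -- drop vanishing terms with k + i ≥ n
  rw [← Finset.sum_filter_add_sum_filter_not (Finset.range n ×ˢ Finset.range n)
    (fun p => p.1 + p.2 < n)]
  have hzero : ∑ p ∈ (Finset.range n ×ˢ Finset.range n).filter (fun p => ¬ p.1 + p.2 < n),
      Ebeta β y ((m : ℤ) - p.1) m * x ^ p.1 * ((Nat.choose d p.2 : R) * β ^ p.2 * x ^ p.2)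
      = 0 := by
    refine Finset.sum_eq_zero fun p hp => ?_
    simp only [Finset.mem_filter, Finset.mem_product, Finset.mem_range, not_lt] at hp
    rcases le_or_gt p.1 m with h1 | h1
    · have h2 : d < p.2 := by omega
      rw [Nat.choose_eq_zero_of_lt h2, Nat.cast_zero, zero_mul, zero_mul, mul_zero]
    · rw [Ebeta, if_neg (by omega), zero_mul, zero_mul]
  rw [hzero, add_zero]
  -- RHS as a sigma sum
  have hRHS : ∑ j ∈ Finset.Icc 1 n, x ^ (n - j)
          * ∑ i ∈ Finset.range (n - j + 1),
              (Nat.choose (c - 1) i : R) * Ebeta β y ((i : ℤ) - (c : ℤ) + (j : ℤ)) (n - c)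
                * β ^ i
      = ∑ p ∈ (Finset.Icc 1 n).sigma (fun j => Finset.range (n - j + 1)),
          x ^ (n - p.1) * ((Nat.choose d p.2 : R)
            * Ebeta β y ((p.2 : ℤ) - (c : ℤ) + (p.1 : ℤ)) m * β ^ p.2) := by
    rw [Finset.sum_sigma]
    refine Finset.sum_congr rfl fun j _ => ?_
    rw [Finset.mul_sum]
  rw [hRHS]
  refine Finset.sum_nbij' (fun p => ⟨n - (p.1 + p.2), p.2⟩) (fun q => (n - q.1 - q.2, q.2))
    ?_ ?_ ?_ ?_ ?_
  · intro p hp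
    simp only [Finset.mem_filter, Finset.mem_product, Finset.mem_range] at hp
    simp only [Finset.mem_sigma, Finset.mem_Icc, Finset.mem_range]
    omega
  · intro q hq
    simp only [Finset.mem_sigma, Finset.mem_Icc, Finset.mem_range] at hq
    simp only [Finset.mem_filter, Finset.mem_product, Finset.mem_range]
    omega
  · intro p hp
    simp only [Finset.mem_filter, Finset.mem_product, Finset.mem_range] at hp
    ext <;> simp <;> omega
  · intro q hq
    simp only [Finset.mem_sigma, Finset.mem_Icc, Finset.mem_range] at hq
    ext <;> simp <;> omega
  · intro p hp
    simp only [Finset.mem_filter, Finset.mem_product, Finset.mem_range] at hp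
    have hidx : (m : ℤ) - p.1 = (p.2 : ℤ) - (c : ℤ) + ((n - (p.1 + p.2) : ℕ) : ℤ) := by
      omega
    have hexp : n - (n - (p.1 + p.2)) = p.1 + p.2 := by omega
    rw [hidx, hexp, pow_add]
    ring
end

section
/- (Factorial Schur Gustafson–Milne identity, the β = 0 case.) Let λ = (λ_1 ≥ ⋯ ≥ λ_k ≥ 0) be a partition with k ≤ n parts satisfying λ_k ≥ n − k. Then s_{(λ_1−n+k, …, λ_k−n+k)}(x_1,…,x_n|y) = Σ_{S ∈ binom([n],k)} s_λ(x_S|y) / (∏_{i∈S}∏_{j∈S̄}(x_i − x_j)), where the left-hand side is the factorial Schur polynomial in n variables indexed by the partition (λ_1−n+k, …, λ_k−n+k) padded with zeros to length n, and s_λ(x_S|y) is the factorial Schur polynomial in the k variables x_S. -/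
/-- `(x|y)^j = (x + y_1)(x + y_2)⋯(x + y_j)`, with `(x|y)^0 = 1` (`y t` is `y_{t+1}`). -/
def facpow {F : Type*} [Field F] (y : ℕ → F) (x : F) (j : ℕ) : F :=
  ∏ t ∈ Finset.range j, (x + y t)

/-- The factorial Schur polynomial, given by the determinantal formula
`s_λ(x|y) = det((x_i|y)^{λ_j+n−j})_{1≤i,j≤n} / ∏_{i<j}(x_i − x_j)`. -/
noncomputable def facSchur {F : Type*} [Field F] (y : ℕ → F) {n : ℕ}
    (lam : Fin n → ℕ) (x : Fin n → F) : F :=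
  (Matrix.of fun i j : Fin n => facpow y (x i) (lam j + (n - 1 - (j : ℕ)))).det
    / ∏ i : Fin n, ∏ j ∈ Finset.Ioi i, (x i - x j)

namespace GM15

open Finset Equiv Matrix

variable {F : Type*} [Field F]

/-- Vandermonde-style product. -/
def V {N : ℕ} (v : Fin N → F) : F := ∏ i : Fin N, ∏ j ∈ Finset.Ioi i, (v i - v j)

lemma prod_Ioi_eq_ite {N : ℕ} (f : Fin N → Fin N → F) :
    ∏ i, ∏ j ∈ Finset.Ioi i, f i j = ∏ i, ∏ j, if i < j then f i j else 1 := by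
  refine Finset.prod_congr rfl fun i _ => ?_
  rw [show Finset.Ioi i = Finset.univ.filter (fun j => i < j) by ext j; simp,
    Finset.prod_filter]

lemma V_eq_ite {N : ℕ} (v : Fin N → F) :
    V v = ∏ i, ∏ j, if i < j then v i - v j else 1 := prod_Ioi_eq_ite _

lemma V_eq_det {N : ℕ} (v : Fin N → F) :
    V v = (∏ i : Fin N, ∏ j ∈ Finset.Ioi i, (-1 : F)) * (Matrix.vandermonde v).det := by
  rw [Matrix.det_vandermonde, ← Finset.prod_mul_distrib]
  refine Finset.prod_congr rfl fun i _ => ?_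
  rw [← Finset.prod_mul_distrib]
  exact Finset.prod_congr rfl fun j _ => by ring

lemma V_comp_perm {N : ℕ} (v : Fin N → F) (σ : Equiv.Perm (Fin N)) :
    V (v ∘ σ) = ((Equiv.Perm.sign σ : ℤ) : F) * V v := by
  have h1 : Matrix.vandermonde (v ∘ σ) = (Matrix.vandermonde v).submatrix σ id := rfl
  rw [V_eq_det, V_eq_det, h1, Matrix.det_permute]
  push_cast
  ring

lemma V_ne_zero {N : ℕ} {v : Fin N → F} (hv : Function.Injective v) : V v ≠ 0 := by
  rw [V, Finset.prod_ne_zero_iff]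
  intro i _
  rw [Finset.prod_ne_zero_iff]
  intro j hj
  have hij : i ≠ j := ne_of_lt (Finset.mem_Ioi.mp hj)
  exact sub_ne_zero.mpr fun hh => hij (hv hh)

lemma prod_rev {N : ℕ} (z : Fin N → F) :
    ∏ i : Fin N, ∏ j ∈ Finset.Ioi i, (z j.rev - z i.rev) = V z := by
  rw [prod_Ioi_eq_ite, V_eq_ite]
  rw [← Equiv.prod_comp (Fin.revPerm)
    (fun i => ∏ j, if i < j then z j.rev - z i.rev else 1)]
  have h : ∀ i : Fin N,
      (∏ j, if Fin.revPerm i < j then z j.rev - z (Fin.revPerm i).rev else 1)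
      = ∏ j, if j < i then z j - z i else 1 := by
    intro i
    rw [← Equiv.prod_comp (Fin.revPerm)
      (fun j => if Fin.revPerm i < j then z j.rev - z (Fin.revPerm i).rev else 1)]
    refine Finset.prod_congr rfl fun j _ => ?_
    simp [Fin.rev_lt_rev]
  simp only [h]
  exact Finset.prod_comm

variable {n k m : ℕ}

/-- The order equivalence `Fin k ⊕ Fin m ≃ Fin n`. -/
def e (hn : k + m = n) : (Fin k ⊕ Fin m) ≃ Fin n := finSumFinEquiv.trans (finCongr hn)

lemma e_inl_coe (hn : k + m = n) (j : Fin k) : ((e hn (Sum.inl j)) : ℕ) = (j : ℕ) := by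
  simp [e]

lemma e_inr_coe (hn : k + m = n) (j : Fin m) : ((e hn (Sum.inr j)) : ℕ) = k + (j : ℕ) := by
  simp [e]

lemma V_split (hn : k + m = n) (u : Fin k ⊕ Fin m → F) :
    V (u ∘ (e hn).symm)
      = V (u ∘ Sum.inl) * V (u ∘ Sum.inr)
        * ∏ a : Fin k, ∏ b : Fin m, (u (Sum.inl a) - u (Sum.inr b)) := by
  rw [V_eq_ite, V_eq_ite, V_eq_ite]
  rw [← Equiv.prod_comp (e hn)
    (fun i => ∏ j, if i < j then (u ∘ (e hn).symm) i - (u ∘ (e hn).symm) j else 1)]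
  have h : ∀ c : Fin k ⊕ Fin m,
      (∏ j, if e hn c < j then (u ∘ (e hn).symm) (e hn c) - (u ∘ (e hn).symm) j else 1)
      = ∏ d, if e hn c < e hn d then u c - u d else 1 := by
    intro c
    rw [← Equiv.prod_comp (e hn)
      (fun j => if e hn c < j then (u ∘ (e hn).symm) (e hn c) - (u ∘ (e hn).symm) j else 1)]
    refine Finset.prod_congr rfl fun d _ => ?_
    simp [Function.comp, Equiv.symm_apply_apply]
  simp only [h]
  have hll : ∀ (a a' : Fin k), (e hn (Sum.inl a) < e hn (Sum.inl a')) ↔ (a < a') := by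
    intro a a'; rw [Fin.lt_def, e_inl_coe, e_inl_coe, Fin.lt_def]
  have hlr : ∀ (a : Fin k) (b : Fin m), (e hn (Sum.inl a) < e hn (Sum.inr b)) ↔ True := by
    intro a b
    rw [Fin.lt_def, e_inl_coe, e_inr_coe]
    have := a.2; simp; omega
  have hrl : ∀ (b : Fin m) (a : Fin k), (e hn (Sum.inr b) < e hn (Sum.inl a)) ↔ False := by
    intro b a
    rw [Fin.lt_def, e_inl_coe, e_inr_coe]
    have := a.2; simp; omega
  have hrr : ∀ (b b' : Fin m), (e hn (Sum.inr b) < e hn (Sum.inr b')) ↔ (b < b') := by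
    intro b b'; rw [Fin.lt_def, e_inr_coe, e_inr_coe, Fin.lt_def]; omega
  rw [Fintype.prod_sum_type]
  simp only [Fintype.prod_sum_type, hll, hlr, hrl, hrr, if_true, if_false,
    Finset.prod_const_one, mul_one, one_mul]
  rw [Finset.prod_mul_distrib]
  simp only [Function.comp]
  ring

lemma card_compl_eq (hn : k + m = n) {S : Finset (Fin n)} (hS : S.card = k) :
    Sᶜ.card = m := by
  rw [Finset.card_compl, hS, Fintype.card_fin]; omega

/-- The map sending `Fin k` to `S` (in order) and `Fin m` to `Sᶜ` (in order). -/
def gfun (hn : k + m = n) (S : Finset (Fin n)) (hS : S.card = k) : Fin k ⊕ Fin m → Fin n :=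
  Sum.elim (fun j => (S.orderIsoOfFin hS j : Fin n))
    (fun j => (Sᶜ.orderIsoOfFin (card_compl_eq hn hS) j : Fin n))

lemma gfun_bij (hn : k + m = n) (S : Finset (Fin n)) (hS : S.card = k) :
    Function.Bijective (gfun hn S hS) := by
  rw [Fintype.bijective_iff_injective_and_card]
  constructor
  · intro c d hcd
    cases c with
    | inl a =>
      cases d with
      | inl a' =>
        simp only [gfun, Sum.elim_inl] at hcd
        exact congrArg Sum.inl ((S.orderIsoOfFin hS).injective (Subtype.ext hcd))
      | inr b =>
        exfalso
        simp only [gfun, Sum.elim_inl, Sum.elim_inr] at hcd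
        have h1 : ((S.orderIsoOfFin hS a : Fin n)) ∈ S := (S.orderIsoOfFin hS a).2
        have h2 : ((Sᶜ.orderIsoOfFin (card_compl_eq hn hS) b : Fin n)) ∈ Sᶜ :=
          (Sᶜ.orderIsoOfFin (card_compl_eq hn hS) b).2
        rw [hcd] at h1
        exact (Finset.mem_compl.mp h2) h1
    | inr b =>
      cases d with
      | inl a' =>
        exfalso
        simp only [gfun, Sum.elim_inl, Sum.elim_inr] at hcd
        have h1 : ((S.orderIsoOfFin hS a' : Fin n)) ∈ S := (S.orderIsoOfFin hS a').2
        have h2 : ((Sᶜ.orderIsoOfFin (card_compl_eq hn hS) b : Fin n)) ∈ Sᶜ :=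
          (Sᶜ.orderIsoOfFin (card_compl_eq hn hS) b).2
        rw [← hcd] at h1
        exact (Finset.mem_compl.mp h2) h1
      | inr b' =>
        simp only [gfun, Sum.elim_inr] at hcd
        exact congrArg Sum.inr ((Sᶜ.orderIsoOfFin (card_compl_eq hn hS)).injective
          (Subtype.ext hcd))
  · simp only [Fintype.card_sum, Fintype.card_fin]
    exact hn

/-- The equivalence `Fin k ⊕ Fin m ≃ Fin n` induced by `S`. -/
noncomputable def rho (hn : k + m = n) (S : Finset (Fin n)) (hS : S.card = k) :
    (Fin k ⊕ Fin m) ≃ Fin n := Equiv.ofBijective _ (gfun_bij hn S hS)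

@[simp] lemma rho_apply (hn : k + m = n) (S : Finset (Fin n)) (hS : S.card = k)
    (c : Fin k ⊕ Fin m) : rho hn S hS c = gfun hn S hS c := rfl

/-- The permutation of `Fin n` associated with `S`. -/
noncomputable def piS (hn : k + m = n) (S : Finset (Fin n)) (hS : S.card = k) :
    Equiv.Perm (Fin n) := (e hn).symm.trans (rho hn S hS)

/-- The decomposition map `(S, τ, υ) ↦ σ`. -/
noncomputable def psi (hn : k + m = n) :
    ({S : Finset (Fin n) // S.card = k} × Equiv.Perm (Fin k) × Equiv.Perm (Fin m))
      → Equiv.Perm (Fin n) :=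
  fun p => (e hn).symm.trans ((Equiv.sumCongr p.2.1 p.2.2).trans (rho hn p.1.1 p.1.2))

lemma psi_apply (hn : k + m = n)
    (p : {S : Finset (Fin n) // S.card = k} × Equiv.Perm (Fin k) × Equiv.Perm (Fin m))
    (i : Fin n) :
    psi hn p i = rho hn p.1.1 p.1.2 (Equiv.sumCongr p.2.1 p.2.2 ((e hn).symm i)) := rfl

lemma psi_bijective (hn : k + m = n) : Function.Bijective (psi hn) := by
  rw [Fintype.bijective_iff_injective_and_card]
  constructor
  · rintro ⟨⟨S, hS⟩, τ, υ⟩ ⟨⟨S', hS'⟩, τ', υ'⟩ hEq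
    have hpt : ∀ c : Fin k ⊕ Fin m,
        gfun hn S hS (Equiv.sumCongr τ υ c) = gfun hn S' hS' (Equiv.sumCongr τ' υ' c) := by
      intro c
      have h1 := congrFun (congrArg (fun (σ : Equiv.Perm (Fin n)) => (σ : Fin n → Fin n)) hEq)
        (e hn c)
      simpa [psi_apply, Equiv.symm_apply_apply] using h1
    have hSS : S = S' := by
      apply Finset.eq_of_subset_of_card_le _ (by rw [hS, hS'])
      intro i hi
      obtain ⟨a, ha⟩ := (S.orderIsoOfFin hS).surjective ⟨i, hi⟩
      have h1 := hpt (Sum.inl (τ⁻¹ a))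
      simp only [Equiv.sumCongr_apply, Sum.map_inl, gfun, Sum.elim_inl,
        Equiv.Perm.inv_def, Equiv.apply_symm_apply] at h1
      rw [ha] at h1
      rw [show i = ((⟨i, hi⟩ : {x // x ∈ S}) : Fin n) from rfl, h1]
      exact (S'.orderIsoOfFin hS' _).2
    subst hSS
    have hτ : τ = τ' := by
      ext j
      have h1 := hpt (Sum.inl j)
      simp only [Equiv.sumCongr_apply, Sum.map_inl, gfun, Sum.elim_inl] at h1
      have := (S.orderIsoOfFin hS).injective (Subtype.ext h1)
      exact congrArg Fin.val this
    have hυ : υ = υ' := by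
      ext j
      have h1 := hpt (Sum.inr j)
      simp only [Equiv.sumCongr_apply, Sum.map_inr, gfun, Sum.elim_inr] at h1
      have := (Sᶜ.orderIsoOfFin (card_compl_eq hn hS)).injective (Subtype.ext h1)
      exact congrArg Fin.val this
    simp [hτ, hυ]
  · rw [Fintype.card_prod, Fintype.card_prod, Fintype.card_perm, Fintype.card_perm,
      Fintype.card_perm, Fintype.card_finset_len, Fintype.card_fin, Fintype.card_fin,
      Fintype.card_fin]
    have h2 := Nat.choose_mul_factorial_mul_factorial (show k ≤ n by omega)
    have hm : m = n - k := by omega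
    subst hm
    rw [← h2]; ring

/-- Generalized Laplace expansion along the first `k` columns. -/
lemma laplace (hn : k + m = n) (M : Matrix (Fin n) (Fin n) F) :
    M.det = ∑ S : {S : Finset (Fin n) // S.card = k},
      ((Equiv.Perm.sign (piS hn S.1 S.2) : ℤ) : F)
        * (M.submatrix (fun i : Fin k => rho hn S.1 S.2 (Sum.inl i))
            (fun j : Fin k => e hn (Sum.inl j))).det
        * (M.submatrix (fun i : Fin m => rho hn S.1 S.2 (Sum.inr i))
            (fun j : Fin m => e hn (Sum.inr j))).det := by
  rw [Matrix.det_apply']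
  rw [← Equiv.sum_comp (Equiv.ofBijective (psi hn) (psi_bijective hn))
    (fun σ : Equiv.Perm (Fin n) => ((Equiv.Perm.sign σ : ℤ) : F) * ∏ i, M (σ i) i)]
  have hofb : ∀ p, (Equiv.ofBijective (psi hn) (psi_bijective hn)) p = psi hn p :=
    fun p => rfl
  simp only [hofb]
  rw [Fintype.sum_prod_type]
  refine Finset.sum_congr rfl fun S _ => ?_
  rw [Fintype.sum_prod_type]
  rw [Matrix.det_apply', Matrix.det_apply', mul_assoc, Finset.sum_mul_sum, Finset.mul_sum]
  refine Finset.sum_congr rfl fun τ _ => ?_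
  rw [Finset.mul_sum]
  refine Finset.sum_congr rfl fun υ _ => ?_
  have hsig : Equiv.Perm.sign (psi hn (S, τ, υ))
      = Equiv.Perm.sign (piS hn S.1 S.2) * (Equiv.Perm.sign τ * Equiv.Perm.sign υ) := by
    have hdecomp : psi hn (S, τ, υ)
        = (piS hn S.1 S.2) * ((e hn).permCongr (Equiv.sumCongr τ υ)) := by
      ext i
      simp [psi_apply, piS, Equiv.permCongr_apply, Equiv.Perm.mul_apply,
        Equiv.symm_apply_apply]
    rw [hdecomp, _root_.map_mul, Equiv.Perm.sign_permCongr, Equiv.Perm.sign_sumCongr]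
  have hprod : ∏ i, M (psi hn (S, τ, υ) i) i
      = (∏ j : Fin k, M (rho hn S.1 S.2 (Sum.inl (τ j))) (e hn (Sum.inl j)))
        * ∏ j : Fin m, M (rho hn S.1 S.2 (Sum.inr (υ j))) (e hn (Sum.inr j)) := by
    rw [← Equiv.prod_comp (e hn) (fun i => M (psi hn (S, τ, υ) i) i)]
    rw [Fintype.prod_sum_type]
    congr 1
    · refine Finset.prod_congr rfl fun j _ => ?_
      rw [psi_apply]
      simp [Equiv.symm_apply_apply]
    · refine Finset.prod_congr rfl fun j _ => ?_
      rw [psi_apply]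
      simp [Equiv.symm_apply_apply]
  rw [hsig, hprod]
  simp only [Matrix.submatrix_apply]
  push_cast
  ring

open Polynomial in
/-- Determinant of the matrix of descending factorial powers. -/
lemma det_facpow_desc (y : ℕ → F) {N : ℕ} (z : Fin N → F) :
    (Matrix.of fun i j : Fin N => facpow y (z i) (N - 1 - (j : ℕ))).det = V z := by
  have h1 : (Matrix.of fun i j : Fin N => facpow y (z i) (N - 1 - (j : ℕ))).det
      = (Matrix.of fun i j : Fin N => facpow y (z i.rev) ((j : ℕ))).det := by
    rw [← Matrix.det_submatrix_equiv_self Fin.revPerm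
      (Matrix.of fun i j : Fin N => facpow y (z i) (N - 1 - (j : ℕ)))]
    congr 1
    ext i j
    simp only [Matrix.submatrix_apply, Matrix.of_apply, Fin.revPerm_apply]
    congr 1
    have hj := j.2
    rw [Fin.val_rev]
    omega
  rw [h1]
  set p : Fin N → Polynomial F := fun j => ∏ t ∈ Finset.range (j : ℕ), (X + C (y t)) with hp
  have hmono : ∀ j : Fin N, ∀ t ∈ Finset.range (j : ℕ), (X + C (y t)).Monic :=
    fun j t _ => monic_X_add_C (y t)
  have hmonic : ∀ j : Fin N, (p j).Monic :=
    fun j => monic_prod_of_monic _ _ (hmono j)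
  have hdeg : ∀ j : Fin N, (p j).natDegree = (j : ℕ) := by
    intro j
    rw [hp, Polynomial.natDegree_prod_of_monic _ _ (hmono j)]
    simp
  have heval : ∀ (w : F) (j : Fin N), (p j).eval w = facpow y w (j : ℕ) := by
    intro w j
    rw [hp, Polynomial.eval_prod, facpow]
    simp
  have h2 := Matrix.det_eval_matrixOfPolynomials_eq_det_vandermonde
    (fun i : Fin N => z i.rev) p hdeg hmonic
  rw [show (Matrix.of fun i j : Fin N => facpow y (z i.rev) ((j : ℕ)))
      = (Matrix.of fun i j : Fin N => (p j).eval (z i.rev)) from by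
    ext i j; simp [heval]]
  rw [← h2, Matrix.det_vandermonde]
  exact prod_rev z

lemma prod_finset_orderIso {k n : ℕ} (S : Finset (Fin n)) (hS : S.card = k) (f : Fin n → F) :
    ∏ i ∈ S, f i = ∏ a : Fin k, f (S.orderIsoOfFin hS a) := by
  refine (Finset.prod_bij (fun (a : Fin k) _ => ((S.orderIsoOfFin hS a : Fin n)))
    ?_ ?_ ?_ ?_).symm
  · intro a _; exact (S.orderIsoOfFin hS a).2
  · intro a _ a' _ hh; exact (S.orderIsoOfFin hS).injective (Subtype.ext hh)
  · intro b hb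
    obtain ⟨a, ha⟩ := (S.orderIsoOfFin hS).surjective ⟨b, hb⟩
    exact ⟨a, Finset.mem_univ a, by rw [ha]⟩
  · intro a _; rfl

lemma facSchur_mul_V {N : ℕ} (y : ℕ → F) (lam : Fin N → ℕ) (x' : Fin N → F)
    (hx' : Function.Injective x') :
    facSchur y lam x' * V x'
      = (Matrix.of fun i j : Fin N => facpow y (x' i) (lam j + (N - 1 - (j : ℕ)))).det := by
  rw [facSchur, V, div_mul_cancel₀]
  exact V_ne_zero hx'

lemma perS (y : ℕ → F) (hn : k + m = n) (x : Fin n → F) (hx : Function.Injective x)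
    (lam : Fin k → ℕ) (hmlam : ∀ j : Fin k, n - k ≤ lam j)
    (S : Finset (Fin n)) (hS : S.card = k) :
    ((Equiv.Perm.sign (piS hn S hS) : ℤ) : F)
      * ((Matrix.of fun i j : Fin n => facpow y (x i)
            ((if h : (j : ℕ) < k then lam ⟨(j : ℕ), h⟩ - (n - k) else 0)
              + (n - 1 - (j : ℕ)))).submatrix
          (fun i : Fin k => rho hn S hS (Sum.inl i)) (fun j : Fin k => e hn (Sum.inl j))).det
      * ((Matrix.of fun i j : Fin n => facpow y (x i)
            ((if h : (j : ℕ) < k then lam ⟨(j : ℕ), h⟩ - (n - k) else 0)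
              + (n - 1 - (j : ℕ)))).submatrix
          (fun i : Fin m => rho hn S hS (Sum.inr i)) (fun j : Fin m => e hn (Sum.inr j))).det
      / (∏ i : Fin n, ∏ j ∈ Finset.Ioi i, (x i - x j))
    = facSchur y lam (fun i : Fin k => x ((S.orderIsoOfFin hS i : Fin n)))
        / ∏ i ∈ S, ∏ j ∈ Sᶜ, (x i - x j) := by
  have hainj : Function.Injective (fun i : Fin k => ((S.orderIsoOfFin hS i : Fin n))) :=
    fun i j hij => (S.orderIsoOfFin hS).injective (Subtype.ext hij)
  have hbinj : Function.Injective
      (fun i : Fin m => ((Sᶜ.orderIsoOfFin (card_compl_eq hn hS) i : Fin n))) :=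
    fun i j hij => (Sᶜ.orderIsoOfFin (card_compl_eq hn hS)).injective (Subtype.ext hij)
  have hxa : Function.Injective (fun i : Fin k => x ((S.orderIsoOfFin hS i : Fin n))) :=
    fun i j hij => hainj (hx hij)
  have hxb : Function.Injective
      (fun i : Fin m => x ((Sᶜ.orderIsoOfFin (card_compl_eq hn hS) i : Fin n))) :=
    fun i j hij => hbinj (hx hij)
  have hdetA : ((Matrix.of fun i j : Fin n => facpow y (x i)
          ((if h : (j : ℕ) < k then lam ⟨(j : ℕ), h⟩ - (n - k) else 0)
            + (n - 1 - (j : ℕ)))).submatrix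
        (fun i : Fin k => rho hn S hS (Sum.inl i)) (fun j : Fin k => e hn (Sum.inl j))).det
      = facSchur y lam (fun i : Fin k => x ((S.orderIsoOfFin hS i : Fin n)))
        * V (fun i : Fin k => x ((S.orderIsoOfFin hS i : Fin n))) := by
    rw [facSchur_mul_V y lam _ hxa]
    congr 1
    ext i j
    simp only [Matrix.submatrix_apply, Matrix.of_apply, rho_apply, gfun, Sum.elim_inl]
    congr 1
    simp only [e_inl_coe]
    rw [dif_pos j.2]
    have heta : (⟨(j : ℕ), j.2⟩ : Fin k) = j := rfl
    rw [heta]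
    have h1 := hmlam j
    have h2 := j.2
    omega
  have hdetD : ((Matrix.of fun i j : Fin n => facpow y (x i)
          ((if h : (j : ℕ) < k then lam ⟨(j : ℕ), h⟩ - (n - k) else 0)
            + (n - 1 - (j : ℕ)))).submatrix
        (fun i : Fin m => rho hn S hS (Sum.inr i)) (fun j : Fin m => e hn (Sum.inr j))).det
      = V (fun i : Fin m => x ((Sᶜ.orderIsoOfFin (card_compl_eq hn hS) i : Fin n))) := by
    rw [← det_facpow_desc y
      (fun i : Fin m => x ((Sᶜ.orderIsoOfFin (card_compl_eq hn hS) i : Fin n)))]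
    congr 1
    ext i j
    simp only [Matrix.submatrix_apply, Matrix.of_apply, rho_apply, gfun, Sum.elim_inr]
    congr 1
    simp only [e_inr_coe]
    rw [dif_neg (by omega)]
    have h2 := j.2
    omega
  have hkey : ((Equiv.Perm.sign (piS hn S hS) : ℤ) : F) * V x
      = V (fun i : Fin k => x ((S.orderIsoOfFin hS i : Fin n)))
        * V (fun i : Fin m => x ((Sᶜ.orderIsoOfFin (card_compl_eq hn hS) i : Fin n)))
        * ∏ a : Fin k, ∏ b : Fin m,
            (x ((S.orderIsoOfFin hS a : Fin n))
              - x ((Sᶜ.orderIsoOfFin (card_compl_eq hn hS) b : Fin n))) := by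
    have h1 := V_comp_perm x (piS hn S hS)
    have h2 := V_split hn (fun c => x (rho hn S hS c))
    rw [← h1]
    have h3 : x ∘ (piS hn S hS) = (fun c => x (rho hn S hS c)) ∘ (e hn).symm := rfl
    rw [h3, h2]
    rfl
  have hMix : (∏ i ∈ S, ∏ j ∈ Sᶜ, (x i - x j))
      = ∏ a : Fin k, ∏ b : Fin m,
          (x ((S.orderIsoOfFin hS a : Fin n))
            - x ((Sᶜ.orderIsoOfFin (card_compl_eq hn hS) b : Fin n))) := by
    rw [prod_finset_orderIso S hS (fun i => ∏ j ∈ Sᶜ, (x i - x j))]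
    refine Finset.prod_congr rfl fun a _ => ?_
    exact prod_finset_orderIso Sᶜ (card_compl_eq hn hS)
      (fun j => x ((S.orderIsoOfFin hS a : Fin n)) - x j)
  have hMixne : (∏ i ∈ S, ∏ j ∈ Sᶜ, (x i - x j)) ≠ 0 := by
    rw [Finset.prod_ne_zero_iff]
    intro i hi
    rw [Finset.prod_ne_zero_iff]
    intro j hj
    have hij : i ≠ j := fun hij => (Finset.mem_compl.mp hj) (hij ▸ hi)
    exact sub_ne_zero.mpr fun hh => hij (hx hh)
  have hs2 : ((Equiv.Perm.sign (piS hn S hS) : ℤ) : F)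
      * ((Equiv.Perm.sign (piS hn S hS) : ℤ) : F) = 1 := by
    rcases Int.units_eq_one_or (Equiv.Perm.sign (piS hn S hS)) with h | h <;> rw [h] <;> norm_num
  have hVx : (∏ i : Fin n, ∏ j ∈ Finset.Ioi i, (x i - x j)) ≠ 0 := V_ne_zero hx
  rw [div_eq_div_iff hVx hMixne]
  rw [hdetA, hdetD, hMix]
  have hVx2 : (∏ i : Fin n, ∏ j ∈ Finset.Ioi i, (x i - x j))
      = ((Equiv.Perm.sign (piS hn S hS) : ℤ) : F)
        * (V (fun i : Fin k => x ((S.orderIsoOfFin hS i : Fin n)))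
          * V (fun i : Fin m => x ((Sᶜ.orderIsoOfFin (card_compl_eq hn hS) i : Fin n)))
          * ∏ a : Fin k, ∏ b : Fin m,
              (x ((S.orderIsoOfFin hS a : Fin n))
                - x ((Sᶜ.orderIsoOfFin (card_compl_eq hn hS) b : Fin n)))) := by
    rw [show (∏ i : Fin n, ∏ j ∈ Finset.Ioi i, (x i - x j)) = V x from rfl]
    rw [← hkey, ← mul_assoc, hs2, one_mul]
  rw [hVx2]
  ring

end GM15

/-- Gustafson–Milne identity for factorial Schur polynomials (the `β = 0` case):
`s_{(λ_1−n+k,…,λ_k−n+k)}(x|y) = Σ_{S ∈ binom([n],k)} s_λ(x_S|y) / ∏_{i∈S}∏_{j∈S̄}(x_i−x_j)`. -/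
theorem stmt15 {F : Type*} [Field F] (y : ℕ → F) (n k : ℕ) (hkn : k ≤ n)
    (x : Fin n → F) (hx : Function.Injective x)
    (lam : Fin k → ℕ) (hlam : Antitone lam) (hk : 0 < k)
    (hmin : n - k ≤ lam ⟨k - 1, Nat.sub_lt hk Nat.one_pos⟩) :
    facSchur y (fun i : Fin n => if h : (i : ℕ) < k then lam ⟨i, h⟩ - (n - k) else 0) x
      = ∑ S : {S : Finset (Fin n) // S.card = k},
          facSchur y lam (fun i : Fin k => x ((S.1.orderIsoOfFin S.2 i : Fin n)))
            / ∏ i ∈ S.1, ∏ j ∈ S.1ᶜ, (x i - x j) := by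
  classical
  obtain ⟨m, hn⟩ : ∃ m, k + m = n := ⟨n - k, by omega⟩
  have hmlam : ∀ j : Fin k, n - k ≤ lam j := by
    intro j
    refine le_trans hmin (hlam ?_)
    rw [Fin.le_def]
    simp only []
    have := j.2
    omega
  rw [facSchur, GM15.laplace hn, Finset.sum_div]
  exact Finset.sum_congr rfl fun S _ => GM15.perS y hn x hx lam hmlam S.1 S.2
end

section
/- For all integers q ≥ 1 and m ≥ 0, every commutative ring R, all β, x_1, …, x_q ∈ R and all y_1, y_2, … ∈ R, the q×q determinant det([x_r|y]^{m+q−c}·(1+βx_r)^{c−1})_{1≤r,c≤q} equals (∏_{r=1}^{q} [x_r|y]^m) · ∏_{1≤i<j≤q}(x_i − x_j). -/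
namespace Stmt17Aux

open Finset Matrix

variable {R : Type*} [CommRing R]

/-- Elementary symmetric polynomial `E y n a = e_a(y 0, …, y (n-1))`. -/
def E (y : ℕ → R) : ℕ → ℕ → R
  | 0, 0 => 1
  | 0, _+1 => 0
  | n+1, 0 => 1
  | n+1, a+1 => E y n (a+1) + y n * E y n a

@[simp] lemma E_zero_right (y : ℕ → R) (n : ℕ) : E y n 0 = 1 := by cases n <;> rfl

lemma E_eq_zero (y : ℕ → R) {n a : ℕ} (h : n < a) : E y n a = 0 := by
  induction n generalizing a with
  | zero => cases a with
    | zero => omega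
    | succ a => rfl
  | succ n ih =>
    cases a with
    | zero => omega
    | succ a =>
      show E y n (a+1) + y n * E y n a = 0
      rw [ih (by omega), ih (by omega), mul_zero, add_zero]

lemma keyA (β : R) (y : ℕ → R) (x : R) :
    ∀ j c : ℕ, fpow β y x j * (1 + β*x)^c
      = ∑ a ∈ range (j+1), E y j a * (x^(j-a) * (1+β*x)^(c+a)) := by
  intro j
  induction j with
  | zero => intro c; simp [fpow]
  | succ j ih =>
    intro c
    have h1 : fpow β y x (j+1) = fpow β y x j * (x + y j + β*x*y j) :=
      Finset.prod_range_succ _ _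
    have key : fpow β y x (j+1) * (1+β*x)^c
        = x * (fpow β y x j * (1+β*x)^c) + y j * (fpow β y x j * (1+β*x)^(c+1)) := by
      rw [h1]; ring
    have hsplit : ∀ a ∈ range (j+1),
        E y (j+1) (a+1) * (x^(j+1-(a+1)) * (1+β*x)^(c+(a+1)))
        = E y j (a+1) * (x^(j-a) * (1+β*x)^(c+a+1))
          + y j * (E y j a * (x^(j-a) * (1+β*x)^(c+1+a))) := by
      intro a _
      show (E y j (a+1) + y j * E y j a) * (x^(j+1-(a+1)) * (1+β*x)^(c+(a+1))) = _
      have h2 : j + 1 - (a+1) = j - a := by omega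
      rw [h2]; ring
    have hterm : ∀ a ∈ range j,
        x * (E y j (a+1) * (x^(j-(a+1)) * (1+β*x)^(c+(a+1))))
        = E y j (a+1) * (x^(j-a) * (1+β*x)^(c+a+1)) := by
      intro a ha
      rw [Finset.mem_range] at ha
      have h3 : j - a = (j - (a+1)) + 1 := by omega
      rw [h3]; ring
    rw [key, ih c, ih (c+1), Finset.mul_sum, Finset.mul_sum,
      Finset.sum_range_succ' (fun a => E y (j+1) a * (x^(j+1-a) * (1+β*x)^(c+a))) (j+1),
      Finset.sum_congr rfl hsplit, Finset.sum_add_distrib,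
      Finset.sum_range_succ (fun a => E y j (a+1) * (x^(j-a) * (1+β*x)^(c+a+1))) j,
      E_eq_zero y (Nat.lt_succ_self j), zero_mul, add_zero,
      Finset.sum_range_succ' (fun a => x * (E y j a * (x^(j-a) * (1+β*x)^(c+a)))) j,
      Finset.sum_congr rfl hterm]
    simp only [E_zero_right, Nat.sub_zero, Nat.add_zero, one_mul, Nat.sub_self]
    ring

end Stmt17Aux

namespace Stmt17Aux
open Finset Matrix
variable {R : Type*} [CommRing R]

lemma keyB (β x : R) {n k : ℕ} (hk : k ≤ n) :
    x^(n-k) * (1+β*x)^k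
      = ∑ i ∈ range (n+1), ((if i ≤ k then ((k.choose i : R) * β^(k-i)) else 0) * x^(n-i)) := by
  rw [show (∑ i ∈ range (n+1), ((if i ≤ k then ((k.choose i : R) * β^(k-i)) else 0) * x^(n-i)))
      = ∑ i ∈ range (k+1), ((if i ≤ k then ((k.choose i : R) * β^(k-i)) else 0) * x^(n-i)) from
    (Finset.sum_subset (Finset.range_subset_range.2 (by omega)) (fun i _ hi => by
      rw [Finset.mem_range] at hi
      rw [if_neg (by omega), zero_mul])).symm]
  rw [add_pow, Finset.mul_sum]
  refine Finset.sum_congr rfl fun i hi => ?_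
  rw [Finset.mem_range] at hi
  rw [if_pos (by omega), one_pow, mul_pow]
  have h1 : n - i = (n - k) + (k - i) := by omega
  rw [h1, pow_add]
  ring

lemma finA (β : R) (y : ℕ → R) (x : R) {q : ℕ} (c : Fin q) :
    fpow β y x (q-1-(c:ℕ)) * (1+β*x)^(c:ℕ)
      = ∑ k : Fin q, (x^(q-1-(k:ℕ)) * (1+β*x)^(k:ℕ)) *
          (if (c:ℕ) ≤ (k:ℕ) then E y (q-1-(c:ℕ)) ((k:ℕ)-(c:ℕ)) else 0) := by
  rw [Fin.sum_univ_eq_sum_range (fun k => (x^(q-1-k) * (1+β*x)^k) *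
      (if (c:ℕ) ≤ k then E y (q-1-(c:ℕ)) (k-(c:ℕ)) else 0)) q]
  rw [Finset.range_eq_Ico,
    ← Finset.sum_Ico_consecutive _ (Nat.zero_le (c:ℕ)) (le_of_lt c.2)]
  rw [show (∑ k ∈ Finset.Ico 0 (c:ℕ), (x^(q-1-k) * (1+β*x)^k) *
      (if (c:ℕ) ≤ k then E y (q-1-(c:ℕ)) (k-(c:ℕ)) else 0)) = 0 from
    Finset.sum_eq_zero fun k hk => by
      rw [Finset.mem_Ico] at hk
      rw [if_neg (by omega), mul_zero]]
  rw [zero_add, Finset.sum_Ico_eq_sum_range, keyA β y x (q-1-(c:ℕ)) (c:ℕ)]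
  have hc : q - 1 - (c:ℕ) + 1 = q - (c:ℕ) := by omega
  rw [hc]
  refine Finset.sum_congr rfl fun a ha => ?_
  rw [Finset.mem_range] at ha
  rw [if_pos (by omega)]
  have h1 : (c:ℕ) + a - (c:ℕ) = a := by omega
  have h2 : q - 1 - ((c:ℕ) + a) = q - 1 - (c:ℕ) - a := by omega
  have h3 : (c:ℕ) + a = (c:ℕ) + a := rfl
  rw [h1, h2]
  ring

lemma finB (β x : R) {q : ℕ} (k : Fin q) :
    x^(q-1-(k:ℕ)) * (1+β*x)^(k:ℕ)
      = ∑ i : Fin q, x^(q-1-(i:ℕ)) *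
          (if (i:ℕ) ≤ (k:ℕ) then (((k:ℕ).choose (i:ℕ) : R) * β^((k:ℕ)-(i:ℕ))) else 0) := by
  rw [Fin.sum_univ_eq_sum_range (fun i => x^(q-1-i) *
      (if i ≤ (k:ℕ) then (((k:ℕ).choose i : R) * β^((k:ℕ)-i)) else 0)) q]
  have hq : q - 1 + 1 = q := Nat.succ_pred_eq_of_pos k.pos
  rw [keyB β x (show (k:ℕ) ≤ q - 1 by omega), hq]
  refine Finset.sum_congr rfl fun i _ => ?_
  ring

end Stmt17Aux

namespace Stmt17Aux
open Finset Matrix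
variable {R : Type*} [CommRing R]

lemma detU (y : ℕ → R) (q : ℕ) :
    (Matrix.of fun k c : Fin q =>
      if (c:ℕ) ≤ (k:ℕ) then E y (q-1-(c:ℕ)) ((k:ℕ)-(c:ℕ)) else 0).det = 1 := by
  rw [Matrix.det_of_lowerTriangular _ (fun i j h => by
    have : (i:ℕ) < (j:ℕ) := h
    exact if_neg (by omega))]
  refine Finset.prod_eq_one fun i _ => ?_
  rw [Matrix.of_apply, if_pos le_rfl, Nat.sub_self, E_zero_right]

lemma detB (β : R) (q : ℕ) :
    (Matrix.of fun i k : Fin q =>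
      if (i:ℕ) ≤ (k:ℕ) then (((k:ℕ).choose (i:ℕ) : R) * β^((k:ℕ)-(i:ℕ))) else 0).det = 1 := by
  rw [Matrix.det_of_upperTriangular (by
    intro i j h
    have : (j:ℕ) < (i:ℕ) := h
    exact if_neg (by omega))]
  refine Finset.prod_eq_one fun i _ => ?_
  rw [Matrix.of_apply, if_pos le_rfl, Nat.choose_self, Nat.sub_self, pow_zero, Nat.cast_one,
    one_mul]

lemma detV {q : ℕ} (x : Fin q → R) :
    (Matrix.of fun r i : Fin q => (x r)^(q-1-(i:ℕ))).det
      = ∏ i : Fin q, ∏ j ∈ Finset.Ioi i, (x i - x j) := by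
  have hV : (Matrix.of fun r i : Fin q => (x r)^(q-1-(i:ℕ)))
      = (Matrix.vandermonde (fun r => x (Fin.rev r))).submatrix Fin.revPerm Fin.revPerm := by
    ext r i
    simp only [Matrix.of_apply, Matrix.submatrix_apply, Matrix.vandermonde_apply,
      Fin.revPerm_apply, Fin.rev_rev]
    congr 1
    rw [Fin.val_rev]
    omega
  rw [hV, Matrix.det_submatrix_equiv_self, Matrix.det_vandermonde]
  rw [Finset.prod_sigma', Finset.prod_sigma']
  refine Finset.prod_nbij' (fun p => ⟨Fin.rev p.2, Fin.rev p.1⟩)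
    (fun p => ⟨Fin.rev p.2, Fin.rev p.1⟩) ?_ ?_ ?_ ?_ ?_
  · rintro ⟨i, j⟩ hij
    rw [Finset.mem_sigma] at hij ⊢
    refine ⟨Finset.mem_univ _, ?_⟩
    rw [Finset.mem_Ioi] at hij ⊢
    exact Fin.rev_lt_rev.2 hij.2
  · rintro ⟨i, j⟩ hij
    rw [Finset.mem_sigma] at hij ⊢
    refine ⟨Finset.mem_univ _, ?_⟩
    rw [Finset.mem_Ioi] at hij ⊢
    exact Fin.rev_lt_rev.2 hij.2
  · rintro ⟨i, j⟩ _; simp [Fin.rev_rev]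
  · rintro ⟨i, j⟩ _; simp [Fin.rev_rev]
  · rintro ⟨i, j⟩ _; rfl

end Stmt17Aux

open Finset Matrix Stmt17Aux in
/-- `det([x_r|y]^{m+q−c}(1+βx_r)^{c−1})_{1≤r,c≤q}
  = (∏_{r=1}^q [x_r|y]^m) ∏_{1≤i<j≤q}(x_i − x_j)`. -/
theorem stmt17 {R : Type*} [CommRing R] (q m : ℕ) (hq : 1 ≤ q)
    (β : R) (x : Fin q → R) (y : ℕ → R) :
    (Matrix.of fun r c : Fin q =>
        fpow β y (x r) (m + (q - 1 - (c : ℕ))) * (1 + β * x r) ^ (c : ℕ)).det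
      = (∏ r : Fin q, fpow β y (x r) m) * ∏ i : Fin q, ∏ j ∈ Finset.Ioi i, (x i - x j) := by
  have hrow : ∀ (r c : Fin q),
      fpow β y (x r) (m + (q - 1 - (c:ℕ))) * (1 + β * x r) ^ (c:ℕ)
      = fpow β y (x r) m *
        (fpow β (fun t => y (m + t)) (x r) (q - 1 - (c:ℕ)) * (1 + β * x r) ^ (c:ℕ)) := by
    intro r c
    rw [fpow, fpow, fpow, Finset.prod_range_add, mul_assoc]
  rw [show (Matrix.of fun r c : Fin q =>
        fpow β y (x r) (m + (q - 1 - (c : ℕ))) * (1 + β * x r) ^ (c : ℕ))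
      = Matrix.of (fun r c : Fin q => fpow β y (x r) m *
          (Matrix.of fun r c : Fin q =>
            fpow β (fun t => y (m + t)) (x r) (q - 1 - (c:ℕ)) * (1 + β * x r) ^ (c:ℕ)) r c) from by
    ext r c
    exact hrow r c]
  rw [Matrix.det_mul_column]
  congr 1
  set y' : ℕ → R := fun t => y (m + t)
  have hMWU : (Matrix.of fun r c : Fin q =>
        fpow β y' (x r) (q - 1 - (c:ℕ)) * (1 + β * x r) ^ (c:ℕ))
      = (Matrix.of fun r k : Fin q => (x r)^(q-1-(k:ℕ)) * (1+β*x r)^(k:ℕ)) *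
        (Matrix.of fun k c : Fin q =>
          if (c:ℕ) ≤ (k:ℕ) then E y' (q-1-(c:ℕ)) ((k:ℕ)-(c:ℕ)) else 0) := by
    ext r c
    rw [Matrix.mul_apply, Matrix.of_apply]
    exact finA β y' (x r) c
  have hWVB : (Matrix.of fun r k : Fin q => (x r)^(q-1-(k:ℕ)) * (1+β*x r)^(k:ℕ))
      = (Matrix.of fun r i : Fin q => (x r)^(q-1-(i:ℕ))) *
        (Matrix.of fun i k : Fin q =>
          if (i:ℕ) ≤ (k:ℕ) then (((k:ℕ).choose (i:ℕ) : R) * β^((k:ℕ)-(i:ℕ))) else 0) := by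
    ext r k
    rw [Matrix.mul_apply, Matrix.of_apply]
    exact finB β (x r) k
  rw [hMWU, Matrix.det_mul, hWVB, Matrix.det_mul, detU, detB β q, detV x]
  ring
end

section
/- Let n ≥ 1 and let S be a k-element subset of [n] = {1,…,n} with complement S̄ = [n] ∖ S. Then for all x_1, …, x_n in a commutative ring, ∏_{1≤i<j≤n}(x_i − x_j) = (−1)^{(Σ_{r∈S} r) − k(k+1)/2} · (∏_{i<j, i,j∈S}(x_i − x_j)) · (∏_{i<j, i,j∈S̄}(x_i − x_j)) · (∏_{i∈S}∏_{j∈S̄}(x_i − x_j)). -/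
open Finset

lemma prod_neg_aux {R : Type*} [CommRing R] {α : Type*} (t : Finset α) (g : α → R) :
    ∏ j ∈ t, -g j = (-1 : R) ^ t.card * ∏ j ∈ t, g j := by
  rw [← Finset.prod_const, ← Finset.prod_mul_distrib]
  exact Finset.prod_congr rfl fun j _ => (neg_one_mul _).symm

lemma sum_card_lt {α : Type*} [LinearOrder α] [DecidableEq α] (S : Finset α) :
    ∑ j ∈ S, (S.filter (· < j)).card = S.card.choose 2 := by
  induction S using Finset.induction_on_max with
  | empty => simp
  | insert a s ha ih =>
    have hna : a ∉ s := fun h => lt_irrefl a (ha a h)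
    rw [Finset.sum_insert hna, Finset.card_insert_of_notMem hna]
    have h1 : (insert a s).filter (· < a) = s := by
      ext y
      simp only [mem_filter, mem_insert]
      constructor
      · rintro ⟨h | h, hy⟩
        · exact absurd (h ▸ hy) (lt_irrefl a)
        · exact h
      · exact fun h => ⟨Or.inr h, ha y h⟩
    have h2 : ∀ j ∈ s, ((insert a s).filter (· < j)).card = (s.filter (· < j)).card := by
      intro j hj
      rw [Finset.filter_insert, if_neg (asymm (ha j hj))]
    rw [h1, Finset.sum_congr rfl h2, ih]
    have hc1 : (s.card + 1).choose 2 = s.card.choose 1 + s.card.choose 2 :=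
      Nat.choose_succ_succ s.card 1
    rw [Nat.choose_one_right] at hc1
    omega

/-- Decomposition of the Vandermonde product along a `k`-subset `S` of `[n]`:
`∏_{1≤i<j≤n}(x_i − x_j) = (−1)^{(Σ_{r∈S} r) − k(k+1)/2} (∏_{i<j, i,j∈S}(x_i−x_j))
(∏_{i<j, i,j∈S̄}(x_i−x_j)) (∏_{i∈S}∏_{j∈S̄}(x_i−x_j))`.
Elements of `Fin n` are 0-based, so `r ∈ S` contributes `r + 1` to the sign exponent;
the exponent `(Σ_{r∈S}(r+1)) − k(k+1)/2` is a genuine natural number since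
`Σ_{r∈S}(r+1) ≥ 1 + 2 + ⋯ + k = k(k+1)/2`. -/
theorem stmt18 {R : Type*} [CommRing R] (n k : ℕ) (hn : 1 ≤ n)
    (x : Fin n → R) (S : Finset (Fin n)) (hS : S.card = k) :
    ∏ i : Fin n, ∏ j ∈ Finset.Ioi i, (x i - x j)
      = (-1 : R) ^ ((∑ r ∈ S, ((r : ℕ) + 1)) - k * (k + 1) / 2)
        * (∏ i ∈ S, ∏ j ∈ S.filter (fun j => i < j), (x i - x j))
        * (∏ i ∈ Sᶜ, ∏ j ∈ Sᶜ.filter (fun j => i < j), (x i - x j))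
        * ∏ i ∈ S, ∏ j ∈ Sᶜ, (x i - x j) := by
  classical
  -- split the inner product over `Ioi i` according to membership in `S`
  have hsplit : ∀ i : Fin n, ∏ j ∈ Finset.Ioi i, (x i - x j)
      = (∏ j ∈ S.filter (fun j => i < j), (x i - x j))
        * ∏ j ∈ Sᶜ.filter (fun j => i < j), (x i - x j) := by
    intro i
    rw [← Finset.prod_filter_mul_prod_filter_not (Finset.Ioi i) (· ∈ S)]
    congr 1
    · apply Finset.prod_congr _ fun _ _ => rfl
      ext j; simp [Finset.mem_Ioi, and_comm]
    · apply Finset.prod_congr _ fun _ _ => rfl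
      ext j; simp [Finset.mem_Ioi, and_comm]
  rw [← Finset.prod_mul_prod_compl S (fun i => ∏ j ∈ Finset.Ioi i, (x i - x j))]
  simp only [hsplit]
  rw [Finset.prod_mul_distrib, Finset.prod_mul_distrib]
  -- the "wrong-order" block: i ∈ Sᶜ, j ∈ S with i < j
  set m : ℕ := ∑ j ∈ S, ((Sᶜ.filter (· < j)).card) with hm
  have hD : (∏ i ∈ Sᶜ, ∏ j ∈ S.filter (fun j => i < j), (x i - x j))
      = (-1 : R) ^ m * ∏ j ∈ S, ∏ i ∈ Sᶜ.filter (· < j), (x j - x i) := by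
    have hcomm : (∏ i ∈ Sᶜ, ∏ j ∈ S.filter (fun j => i < j), (x i - x j))
        = ∏ j ∈ S, ∏ i ∈ Sᶜ.filter (· < j), (x i - x j) := by
      apply Finset.prod_comm'
      intro i j
      simp only [Finset.mem_filter]
      tauto
    rw [hcomm]
    have hneg : ∀ j ∈ S, ∏ i ∈ Sᶜ.filter (· < j), (x i - x j)
        = (-1 : R) ^ (Sᶜ.filter (· < j)).card * ∏ i ∈ Sᶜ.filter (· < j), (x j - x i) := by
      intro j _
      rw [← prod_neg_aux]
      exact Finset.prod_congr rfl fun i _ => by ring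
    rw [Finset.prod_congr rfl hneg, Finset.prod_mul_distrib,
      Finset.prod_pow_eq_pow_sum]
  rw [hD]
  -- combine the two mixed blocks
  have hmix : (∏ i ∈ S, ∏ j ∈ Sᶜ.filter (fun j => i < j), (x i - x j))
      * (∏ j ∈ S, ∏ i ∈ Sᶜ.filter (· < j), (x j - x i))
      = ∏ i ∈ S, ∏ j ∈ Sᶜ, (x i - x j) := by
    rw [← Finset.prod_mul_distrib]
    apply Finset.prod_congr rfl
    intro i hi
    rw [mul_comm, ← Finset.prod_filter_mul_prod_filter_not Sᶜ (· < i)]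
    congr 1
    refine Finset.prod_congr (Finset.filter_congr fun j hj => ?_) fun _ _ => rfl
    simp only [Finset.mem_compl] at hj
    simp only [not_lt, eq_iff_iff]
    constructor
    · exact le_of_lt
    · intro hij
      exact lt_of_le_of_ne hij fun h : i = j => hj (by rw [← h]; exact hi)
  -- identify the exponent
  have hexp : m = (∑ r ∈ S, ((r : ℕ) + 1)) - k * (k + 1) / 2 := by
    have hsum : ∀ j : Fin n, (Sᶜ.filter (· < j)).card + (S.filter (· < j)).card = (j : ℕ) := by
      intro j
      rw [← Fin.card_Iio j]
      have e1 : Sᶜ.filter (· < j) = (Finset.Iio j).filter (· ∉ S) := by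
        ext i; simp [Finset.mem_Iio, and_comm]
      have e2 : S.filter (· < j) = (Finset.Iio j).filter (· ∈ S) := by
        ext i; simp [Finset.mem_Iio, and_comm]
      rw [e1, e2, add_comm, Finset.card_filter_add_card_filter_not]
    have h1 : m + ∑ j ∈ S, (S.filter (· < j)).card = ∑ j ∈ S, (j : ℕ) := by
      rw [hm, ← Finset.sum_add_distrib]
      exact Finset.sum_congr rfl fun j _ => hsum j
    rw [sum_card_lt, hS] at h1
    have h2 : (∑ r ∈ S, ((r : ℕ) + 1)) = (∑ r ∈ S, (r : ℕ)) + k := by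
      rw [Finset.sum_add_distrib, Finset.sum_const, hS, smul_eq_mul, mul_one]
    have h3 : k * (k + 1) / 2 = k.choose 2 + k := by
      have hc1 : (k + 1).choose 2 = k.choose 1 + k.choose 2 := Nat.choose_succ_succ k 1
      have hc2 : (k + 1).choose 2 = (k + 1) * k / 2 := by
        rw [Nat.choose_two_right]; simp
      rw [Nat.choose_one_right] at hc1
      rw [mul_comm]
      omega
    omega
  rw [← hexp, ← hmix]
  ring
end
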